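/- arXiv:2505.12097 — 3 statements merged into one kernel-verified Lean document; each statement's English description precedes it below -/
import Mathlib

section
/- Let X be a Polish space and suppose Assumptions A-T and A-D hold. Then for every ε > 0 the proximal optimal transport divergence 𝔇^c_ε is a divergence: for all Borel probability measures P, Q on X one has 𝔇^c_ε(P‖Q) ≥ 0, and 𝔇^c_ε(P‖Q) = 0 if and only if P = Q. -/
open MeasureTheory Filter Topology

/-- The optimal transport cost between two measures for the cost function `c`,
defined as the infimum of `∫ c dπ` over all couplings `π` of `P` and `Q`. -/
noncomputable def transportCost {X Y : Type*} [MeasurableSpace X] [MeasurableSpace Y]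
    (c : X × Y → ENNReal) (P : Measure X) (Q : Measure Y) : ENNReal :=
  ⨅ π ∈ {π : Measure (X × Y) | π.map Prod.fst = P ∧ π.map Prod.snd = Q}, ∫⁻ z, c z ∂π

/-- The proximal optimal transport divergence
`𝔇^c_ε(P‖Q) = inf_R [ T_c(P,R) + ε 𝔇(R‖Q) ]`. -/
noncomputable def proxOT {X : Type*} [MeasurableSpace X]
    (c : X × X → ENNReal) (D : ProbabilityMeasure X → ProbabilityMeasure X → ENNReal)
    (ε : ENNReal) (P Q : ProbabilityMeasure X) : ENNReal :=
  ⨅ R : ProbabilityMeasure X,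
    transportCost c (P : Measure X) (R : Measure X) + ε * D R Q

section AuxTight

open Set

/-- Every finite Borel measure on a complete separable metric space is tight. -/
lemma aux_tight {X : Type*} [MetricSpace X] [CompleteSpace X]
    [TopologicalSpace.SeparableSpace X] [MeasurableSpace X] [OpensMeasurableSpace X]
    (μ : Measure X) [IsFiniteMeasure μ] {η : ENNReal} (hη : η ≠ 0) :
    ∃ K : Set X, IsCompact K ∧ μ Kᶜ ≤ η := by
  rcases isEmpty_or_nonempty X with hX | hX
  · refine ⟨∅, isCompact_empty, ?_⟩
    simp [Set.eq_empty_of_isEmpty]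
  · set u : ℕ → X := TopologicalSpace.denseSeq X with hu_def
    have hu : DenseRange u := TopologicalSpace.denseRange_denseSeq X
    set A : ℕ → ℕ → Set X :=
      fun m N => ⋃ j ∈ Finset.range (N + 1), Metric.closedBall (u j) (((m : ℝ) + 1)⁻¹) with hA
    have hAclosed : ∀ m N, IsClosed (A m N) := by
      intro m N
      exact (Finset.range (N + 1)).finite_toSet.isClosed_biUnion
        fun j _ => Metric.isClosed_closedBall
    have hAmono : ∀ m, Monotone (A m) := by
      intro m N N' hNN'
      apply Set.biUnion_subset_biUnion_left
      intro j hj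
      have hj' : j < N + 1 := Finset.mem_range.mp (Finset.mem_coe.mp hj)
      exact Finset.mem_coe.mpr (Finset.mem_range.mpr (by omega))
    have hAunion : ∀ m, (⋃ N, A m N) = univ := by
      intro m
      apply eq_univ_of_forall
      intro x
      have hrpos : (0 : ℝ) < ((m : ℝ) + 1)⁻¹ := by positivity
      obtain ⟨j, hj⟩ := Metric.denseRange_iff.mp hu x _ hrpos
      refine Set.mem_iUnion.mpr ⟨j, Set.mem_iUnion₂.mpr ⟨j, by simp, ?_⟩⟩
      exact Metric.mem_closedBall.mpr (le_of_lt hj)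
    have hcompl : ∀ m, Tendsto (fun N => μ ((A m N)ᶜ)) atTop (𝓝 0) := by
      intro m
      have h1 : Tendsto (fun N => μ ((A m N)ᶜ)) atTop (𝓝 (μ (⋂ N, (A m N)ᶜ))) := by
        apply tendsto_measure_iInter_atTop
        · exact fun N => ((hAclosed m N).isOpen_compl.measurableSet).nullMeasurableSet
        · intro N N' h
          exact Set.compl_subset_compl.mpr (hAmono m h)
        · exact ⟨0, measure_ne_top μ _⟩
      have h2 : (⋂ N, (A m N)ᶜ) = ∅ := by
        rw [← Set.compl_iUnion, hAunion m, Set.compl_univ]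
      rwa [h2, measure_empty] at h1
    have hchoice : ∀ m : ℕ, ∃ N, μ ((A m N)ᶜ) ≤ η * (2⁻¹ : ENNReal) ^ (m + 1) := by
      intro m
      have hpos : (0 : ENNReal) < η * (2⁻¹ : ENNReal) ^ (m + 1) :=
        ENNReal.mul_pos hη (by simp)
      obtain ⟨N, hN⟩ := ((hcompl m).eventually (ge_mem_nhds hpos)).exists
      exact ⟨N, hN⟩
    choose N hN using hchoice
    refine ⟨⋂ m, A m (N m), ?_, ?_⟩
    · apply TotallyBounded.isCompact_of_isClosed
      · rw [Metric.totallyBounded_iff]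
        intro r hr
        obtain ⟨m, hm⟩ := exists_nat_one_div_lt hr
        refine ⟨u '' (Finset.range (N m + 1) : Set ℕ), (Set.toFinite _).image u, ?_⟩
        intro x hx
        have hx' : x ∈ A m (N m) := Set.mem_iInter.mp hx m
        obtain ⟨j, hj, hxj⟩ := Set.mem_iUnion₂.mp hx'
        refine Set.mem_biUnion ⟨j, by simpa using hj, rfl⟩ ?_
        have hlt : ((m : ℝ) + 1)⁻¹ < r := by rwa [one_div] at hm
        exact Metric.closedBall_subset_ball hlt hxj
      · exact isClosed_iInter fun m => hAclosed m (N m)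
    · rw [Set.compl_iInter]
      refine (measure_iUnion_le _).trans ?_
      refine (ENNReal.tsum_le_tsum fun m => hN m).trans ?_
      rw [ENNReal.tsum_mul_left]
      have hgeo : (∑' m : ℕ, (2⁻¹ : ENNReal) ^ (m + 1)) = 1 := by
        have h1 : (∑' m : ℕ, (2⁻¹ : ENNReal) ^ (m + 1))
            = 2⁻¹ * ∑' m : ℕ, (2⁻¹ : ENNReal) ^ m := by
          rw [← ENNReal.tsum_mul_left]
          congr 1
          funext m
          rw [pow_succ, mul_comm]
        rw [h1, ENNReal.tsum_geometric, ENNReal.one_sub_inv_two, inv_inv]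
        simp [ENNReal.inv_mul_cancel]
      rw [hgeo, mul_one]

end AuxTight

/-- The proximal OT divergence is a divergence: it is nonnegative and vanishes iff `P = Q`. -/
theorem proxOT_divergence
    {X : Type*} [TopologicalSpace X] [PolishSpace X] [MeasurableSpace X] [BorelSpace X]
    (c : X × X → ENNReal) (hc : LowerSemicontinuous c)
    -- Assumption A-T: the transport cost is a divergence
    (hT0 : ∀ P Q : ProbabilityMeasure X,
      transportCost c (P : Measure X) (Q : Measure X) = 0 ↔ P = Q)
    (D : ProbabilityMeasure X → ProbabilityMeasure X → ENNReal)
    -- Assumption A-D: `D` is a divergence,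
    (hD0 : ∀ P Q : ProbabilityMeasure X, D P Q = 0 ↔ P = Q)
    -- jointly convex,
    (hDcvx : ∀ (P₁ P₂ Q₁ Q₂ Pm Qm : ProbabilityMeasure X) (t : ENNReal), t ≤ 1 →
      (Pm : Measure X) = t • (P₁ : Measure X) + (1 - t) • (P₂ : Measure X) →
      (Qm : Measure X) = t • (Q₁ : Measure X) + (1 - t) • (Q₂ : Measure X) →
      D Pm Qm ≤ t * D P₁ Q₁ + (1 - t) * D P₂ Q₂)
    -- lower semicontinuous in the weak topology,
    (hDlsc : LowerSemicontinuous
      (fun PQ : ProbabilityMeasure X × ProbabilityMeasure X => D PQ.1 PQ.2))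
    -- with weakly precompact sublevel sets,
    (hDcpt : ∀ (Q : ProbabilityMeasure X) (α : NNReal),
      IsCompact (closure {R : ProbabilityMeasure X | D R Q ≤ (α : ENNReal)}))
    -- and strictly convex in its first argument on the set where it is finite
    (hDsc : ∀ (Q R₁ R₂ Rm : ProbabilityMeasure X) (t : ENNReal), R₁ ≠ R₂ →
      D R₁ Q < ⊤ → D R₂ Q < ⊤ → 0 < t → t < 1 →
      (Rm : Measure X) = t • (R₁ : Measure X) + (1 - t) • (R₂ : Measure X) →
      D Rm Q < t * D R₁ Q + (1 - t) * D R₂ Q)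
    (ε : ENNReal) (hε : 0 < ε) (hε' : ε ≠ ⊤)
    (P Q : ProbabilityMeasure X) :
    0 ≤ proxOT c D ε P Q ∧ (proxOT c D ε P Q = 0 ↔ P = Q) := by
  refine ⟨zero_le, ?_, ?_⟩
  · -- hard direction
    intro h0
    letI := TopologicalSpace.upgradeIsCompletelyMetrizable X
    have hcm : Measurable c := hc.measurable
    -- c vanishes only on the diagonal
    have hczero : ∀ x y : X, c (x, y) = 0 → x = y := by
      intro x y hxy
      have hmem : Measure.dirac (x, y) ∈
          {π : Measure (X × X) | π.map Prod.fst = Measure.dirac x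
            ∧ π.map Prod.snd = Measure.dirac y} :=
        ⟨Measure.map_dirac' measurable_fst _, Measure.map_dirac' measurable_snd _⟩
      have hTle : transportCost c (Measure.dirac x) (Measure.dirac y) ≤ c (x, y) := by
        refine le_trans (iInf₂_le (Measure.dirac (x, y)) hmem) ?_
        rw [lintegral_dirac' _ hcm]
      have hT : transportCost c (Measure.dirac x) (Measure.dirac y) = 0 :=
        le_antisymm (by rw [← hxy]; exact hTle) (zero_le)
      have hdd : (⟨Measure.dirac x, inferInstance⟩ : ProbabilityMeasure X)
          = ⟨Measure.dirac y, inferInstance⟩ := (hT0 _ _).mp hT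
      have hdd' : Measure.dirac x = Measure.dirac y := congrArg Subtype.val hdd
      by_contra hne
      have h1 : (Measure.dirac x) {x} = 1 := by
        rw [Measure.dirac_apply x {x}]
        simp
      have h2 : (Measure.dirac y) {x} = 0 := by
        rw [Measure.dirac_apply y {x}]
        simp [Set.indicator_of_notMem, Ne.symm hne]
      rw [hdd', h2] at h1
      exact zero_ne_one h1
    -- extract near-minimizers
    have key : ∀ n : ℕ, ∃ R : ProbabilityMeasure X, ∃ π : Measure (X × X),
        π.map Prod.fst = (P : Measure X) ∧ π.map Prod.snd = (R : Measure X) ∧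
        (∫⁻ z, c z ∂π) ≤ ε * (2⁻¹ : ENNReal) ^ (n + 1) ∧
        D R Q ≤ (2⁻¹ : ENNReal) ^ (n + 1) := by
      intro n
      have hpos : (0 : ENNReal) < ε * (2⁻¹ : ENNReal) ^ (n + 1) :=
        ENNReal.mul_pos hε.ne' (by simp)
      have hlt : proxOT c D ε P Q < ε * (2⁻¹ : ENNReal) ^ (n + 1) := h0 ▸ hpos
      rw [proxOT, iInf_lt_iff] at hlt
      obtain ⟨R, hR⟩ := hlt
      have hD : D R Q ≤ (2⁻¹ : ENNReal) ^ (n + 1) := by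
        have h1 : ε * D R Q < ε * (2⁻¹ : ENNReal) ^ (n + 1) :=
          lt_of_le_of_lt le_add_self hR
        exact le_of_lt ((ENNReal.mul_right_strictMono hε.ne' hε').lt_iff_lt.mp h1)
      have hT : transportCost c (P : Measure X) (R : Measure X)
          < ε * (2⁻¹ : ENNReal) ^ (n + 1) := lt_of_le_of_lt le_self_add hR
      rw [transportCost, iInf_lt_iff] at hT
      obtain ⟨π, hπ⟩ := hT
      rw [iInf_lt_iff] at hπ
      obtain ⟨hπmem, hπc⟩ := hπ
      exact ⟨R, π, hπmem.1, hπmem.2, le_of_lt hπc, hD⟩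
    choose R π hπ1 hπ2 hπc hπD using key
    -- extract a weakly convergent subsequence with limit Q
    have hpowle : ∀ n : ℕ, ((2⁻¹ : ENNReal) ^ (n + 1)) ≤ 1 :=
      fun n => pow_le_one₀ (zero_le) (by simp)
    have hmem : ∀ n, R n ∈ closure {R' : ProbabilityMeasure X | D R' Q ≤ ((1 : NNReal) : ENNReal)} :=
      fun n => subset_closure (le_trans (hπD n) (by simpa using hpowle n))
    obtain ⟨Rs, _, φ, hφ, hconv⟩ := (hDcpt Q 1).tendsto_subseq hmem
    have hpowmono : ∀ k : ℕ, ((2⁻¹ : ENNReal) ^ (φ k + 1)) ≤ (2⁻¹ : ENNReal) ^ (k + 1) :=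
      fun k => pow_le_pow_of_le_one (zero_le) (by simp) (by have hk : k ≤ φ k := hφ.le_apply; omega)
    have hpowtend : Tendsto (fun k : ℕ => (2⁻¹ : ENNReal) ^ (k + 1)) atTop (𝓝 0) := by
      have h := ENNReal.tendsto_pow_atTop_nhds_zero_of_lt_one
        (by simp : (2⁻¹ : ENNReal) < 1)
      exact h.comp (tendsto_add_atTop_nat 1)
    have hRsQ : Rs = Q := by
      by_contra hne
      have hpos : 0 < D Rs Q := by
        rcases eq_or_ne (D Rs Q) 0 with h | h
        · exact absurd ((hD0 _ _).mp h) hne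
        · exact lt_of_le_of_ne (zero_le) (Ne.symm h)
      obtain ⟨y, hy0, hyD⟩ := exists_between hpos
      have htend : Tendsto (fun k => (R (φ k), Q)) atTop (𝓝 (Rs, Q)) :=
        hconv.prodMk_nhds tendsto_const_nhds
      have hev1 : ∀ᶠ k in atTop, y < D (R (φ k)) Q :=
        htend.eventually (hDlsc (Rs, Q) y hyD)
      have hev2 : ∀ᶠ k in atTop, D (R (φ k)) Q < y := by
        filter_upwards [hpowtend.eventually_lt_const hy0] with k hk
        exact lt_of_le_of_lt (le_trans (hπD (φ k)) (hpowmono k)) hk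
      obtain ⟨k, h1, h2⟩ := (hev1.and hev2).exists
      exact absurd (h1.trans h2) (lt_irrefl y)
    rw [hRsQ] at hconv
    -- main step: P F ≤ Q F for every compact F
    have main : ∀ F : Set X, IsCompact F → (P : Measure X) F ≤ (Q : Measure X) F := by
      intro F hF
      have hFmeas : MeasurableSet F := hF.isClosed.measurableSet
      set δ : ℕ → ENNReal := fun j => ((j : ENNReal) + 1)⁻¹ with hδ
      have hδpos : ∀ j, 0 < δ j := fun j => ENNReal.inv_pos.mpr (by simp)
      have hδtop : ∀ j, δ j ≠ ⊤ := fun j => ENNReal.inv_ne_top.mpr (by simp)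
      set G : ℕ → Set X := fun j => {y | ∃ x ∈ F, c (x, y) < δ j} with hG
      set C : ℕ → Set X := fun j => closure (G j) with hC
      have hCclosed : ∀ j, IsClosed (C j) := fun j => isClosed_closure
      -- Claim A
      have claimA : ∀ j k, (P : Measure X) F
          ≤ ((R (φ k) : Measure X)) (C j) + (ε * (2⁻¹ : ENNReal) ^ (φ k + 1)) * ((j : ENNReal) + 1) := by
        intro j k
        have hPF : (P : Measure X) F = π (φ k) (Prod.fst ⁻¹' F) := by
          rw [← hπ1 (φ k), Measure.map_apply measurable_fst hFmeas]
        have hsub : Prod.fst ⁻¹' F ⊆ (Prod.snd ⁻¹' C j) ∪ {z : X × X | δ j ≤ c z} := by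
          rintro ⟨x, y⟩ hx
          by_cases hcz : c (x, y) < δ j
          · exact Or.inl (subset_closure ⟨x, hx, hcz⟩)
          · exact Or.inr (not_lt.mp hcz)
        have hcheb : π (φ k) {z : X × X | δ j ≤ c z}
            ≤ (ε * (2⁻¹ : ENNReal) ^ (φ k + 1)) * ((j : ENNReal) + 1) := by
          have h1 : δ j * π (φ k) {z : X × X | δ j ≤ c z} ≤ ∫⁻ z, c z ∂(π (φ k)) :=
            mul_meas_ge_le_lintegral₀ hcm.aemeasurable (δ j)
          have h2 : π (φ k) {z : X × X | δ j ≤ c z} ≤ (∫⁻ z, c z ∂(π (φ k))) / δ j :=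
            (ENNReal.le_div_iff_mul_le (Or.inl (hδpos j).ne') (Or.inl (hδtop j))).mpr
              (by rwa [mul_comm])
          refine h2.trans ?_
          rw [hδ, div_eq_mul_inv, inv_inv]
          exact mul_le_mul_left (hπc (φ k)) _
        have hπC : π (φ k) (Prod.snd ⁻¹' C j) = ((R (φ k) : Measure X)) (C j) := by
          rw [← hπ2 (φ k), Measure.map_apply measurable_snd (hCclosed j).measurableSet]
        calc (P : Measure X) F = π (φ k) (Prod.fst ⁻¹' F) := hPF
          _ ≤ π (φ k) ((Prod.snd ⁻¹' C j) ∪ {z : X × X | δ j ≤ c z}) := measure_mono hsub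
          _ ≤ π (φ k) (Prod.snd ⁻¹' C j) + π (φ k) {z : X × X | δ j ≤ c z} :=
              measure_union_le _ _
          _ ≤ ((R (φ k) : Measure X)) (C j) + (ε * (2⁻¹ : ENNReal) ^ (φ k + 1)) * ((j : ENNReal) + 1) := by
              rw [hπC]; exact add_le_add_right hcheb _
      -- Claim B
      have claimB : ∀ j, (P : Measure X) F ≤ (Q : Measure X) (C j) := by
        intro j
        have hlimsup := ProbabilityMeasure.limsup_measure_closed_le_of_tendsto hconv (hCclosed j)
        refine ENNReal.le_of_forall_pos_le_add fun η hη hQfin => ?_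
        have hη2 : (0 : ENNReal) < (η : ENNReal) / 2 :=
          ENNReal.div_pos (by exact_mod_cast hη.ne') (by simp)
        have hev1 : ∀ᶠ k in atTop,
            ((R (φ k) : Measure X)) (C j) < (Q : Measure X) (C j) + (η : ENNReal) / 2 := by
          exact Filter.eventually_lt_of_limsup_lt
            (lt_of_le_of_lt hlimsup (ENNReal.lt_add_right (measure_ne_top _ _) hη2.ne'))
        have hbt : Tendsto (fun k : ℕ =>
            (ε * (2⁻¹ : ENNReal) ^ (k + 1)) * ((j : ENNReal) + 1)) atTop (𝓝 0) := by
          have h1 : Tendsto (fun k : ℕ =>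
              (ε * ((j : ENNReal) + 1)) * (2⁻¹ : ENNReal) ^ (k + 1)) atTop (𝓝 0) := by
            have hjtop : ((j : ENNReal) + 1) ≠ ⊤ :=
              ENNReal.add_ne_top.mpr ⟨ENNReal.natCast_ne_top j, ENNReal.one_ne_top⟩
            have := ENNReal.Tendsto.const_mul hpowtend
              (Or.inr (ENNReal.mul_ne_top hε' hjtop))
            simpa using this
          refine h1.congr fun k => by ring
        have hev2 : ∀ᶠ k in atTop,
            (ε * (2⁻¹ : ENNReal) ^ (k + 1)) * ((j : ENNReal) + 1) < (η : ENNReal) / 2 :=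
          hbt.eventually_lt_const hη2
        obtain ⟨k, h1, h2⟩ := (hev1.and hev2).exists
        have h3 : (ε * (2⁻¹ : ENNReal) ^ (φ k + 1)) * ((j : ENNReal) + 1)
            ≤ (ε * (2⁻¹ : ENNReal) ^ (k + 1)) * ((j : ENNReal) + 1) :=
          mul_le_mul_left (mul_le_mul_right (hpowmono k) _) _
        calc (P : Measure X) F
            ≤ ((R (φ k) : Measure X)) (C j) + (ε * (2⁻¹ : ENNReal) ^ (φ k + 1)) * ((j : ENNReal) + 1) :=
              claimA j k
          _ ≤ ((Q : Measure X) (C j) + (η : ENNReal) / 2) + (η : ENNReal) / 2 :=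
              add_le_add h1.le (h3.trans h2.le)
          _ = (Q : Measure X) (C j) + (η : ENNReal) := by
              rw [add_assoc, ENNReal.add_halves]
      -- Claim C
      have claimC : (⋂ j, C j) ⊆ F := by
        intro y hy
        have hmemC : ∀ j : ℕ, ∃ y' x, x ∈ F ∧ c (x, y') < δ j ∧ dist y' y < ((j : ℝ) + 1)⁻¹ := by
          intro j
          have hyC : y ∈ C j := Set.mem_iInter.mp hy j
          have hrpos : (0 : ℝ) < ((j : ℝ) + 1)⁻¹ := by positivity
          obtain ⟨y', hy'G, hy'd⟩ := Metric.mem_closure_iff.mp hyC _ hrpos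
          obtain ⟨x, hxF, hxc⟩ := hy'G
          exact ⟨y', x, hxF, hxc, by rwa [dist_comm]⟩
        choose ys xs hxF hc' hdist using hmemC
        have hys : Tendsto ys atTop (𝓝 y) := by
          rw [tendsto_iff_dist_tendsto_zero]
          apply squeeze_zero (fun j => dist_nonneg) (fun j => (hdist j).le)
          have : Tendsto (fun j : ℕ => ((j : ℝ) + 1)⁻¹) atTop (𝓝 0) :=
            tendsto_one_div_add_atTop_nhds_zero_nat.congr fun j => by rw [one_div]
          exact this
        obtain ⟨x, hxFmem, ψ, hψ, hxconv⟩ := hF.tendsto_subseq hxF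
        have hxy : Tendsto (fun i => (xs (ψ i), ys (ψ i))) atTop (𝓝 (x, y)) :=
          hxconv.prodMk_nhds (hys.comp hψ.tendsto_atTop)
        have hc0 : c (x, y) = 0 := by
          by_contra hc0
          obtain ⟨b, hb0, hbc⟩ := exists_between (lt_of_le_of_ne (zero_le) (Ne.symm hc0) : (0:ENNReal) < c (x, y))
          have hev1 : ∀ᶠ i in atTop, b < c (xs (ψ i), ys (ψ i)) :=
            hxy.eventually (hc (x, y) b hbc)
          have hδtend : Tendsto (fun i : ℕ => δ i) atTop (𝓝 0) := by
            refine tendsto_of_tendsto_of_tendsto_of_le_of_le tendsto_const_nhds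
              ENNReal.tendsto_inv_nat_nhds_zero (fun i => zero_le) fun i => ?_
            simp only [hδ]
            exact ENNReal.inv_le_inv.mpr le_self_add
          have hev2 : ∀ᶠ i in atTop, c (xs (ψ i), ys (ψ i)) < b := by
            filter_upwards [hδtend.eventually_lt_const hb0] with i hi
            refine lt_of_lt_of_le (hc' (ψ i)) (le_of_lt ?_)
            refine lt_of_le_of_lt ?_ hi
            simp only [hδ]
            exact ENNReal.inv_le_inv.mpr
              (add_le_add_left (Nat.cast_le.mpr hψ.le_apply) 1)
          obtain ⟨i, h1, h2⟩ := (hev1.and hev2).exists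
          exact absurd (h1.trans h2) (lt_irrefl b)
        exact (hczero x y hc0) ▸ hxFmem
      have hCanti : Antitone C := by
        intro j j' hjj'
        apply closure_mono
        intro y hyG
        obtain ⟨x, hxF, hxc⟩ := hyG
        refine ⟨x, hxF, lt_of_lt_of_le hxc ?_⟩
        simp only [hδ]
        exact ENNReal.inv_le_inv.mpr (add_le_add_left (Nat.cast_le.mpr hjj') 1)
      calc (P : Measure X) F ≤ ⨅ j, (Q : Measure X) (C j) := le_iInf claimB
        _ = (Q : Measure X) (⋂ j, C j) := by
            rw [hCanti.measure_iInter (fun j => (hCclosed j).measurableSet.nullMeasurableSet)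
              ⟨0, measure_ne_top _ _⟩]
        _ ≤ (Q : Measure X) F := measure_mono claimC
    -- from compact sets to closed sets via tightness
    have hclosed : ∀ F : Set X, IsClosed F → (P : Measure X) F ≤ (Q : Measure X) F := by
      intro F hFc
      refine ENNReal.le_of_forall_pos_le_add fun η hη _ => ?_
      obtain ⟨K, hK, hKc⟩ := aux_tight (P : Measure X) (by exact_mod_cast hη.ne' : (η : ENNReal) ≠ 0)
      have hsub : F ⊆ (F ∩ K) ∪ Kᶜ := by
        intro x hx
        by_cases hxK : x ∈ K
        · exact Or.inl ⟨hx, hxK⟩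
        · exact Or.inr hxK
      calc (P : Measure X) F ≤ (P : Measure X) ((F ∩ K) ∪ Kᶜ) := measure_mono hsub
        _ ≤ (P : Measure X) (F ∩ K) + (P : Measure X) Kᶜ := measure_union_le _ _
        _ ≤ (Q : Measure X) (F ∩ K) + (η : ENNReal) :=
            add_le_add (main _ (hK.inter_left hFc)) hKc
        _ ≤ (Q : Measure X) F + (η : ENNReal) :=
            add_le_add_left (measure_mono Set.inter_subset_left) _
    -- open sets
    have hopen : ∀ U : Set X, IsOpen U → (P : Measure X) U = (Q : Measure X) U := by
      intro U hU
      have h1 : (P : Measure X) U ≤ (Q : Measure X) U := by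
        refine le_of_forall_lt fun r hr => ?_
        obtain ⟨F, hFU, hFc, hrF⟩ :=
          (MeasureTheory.Measure.InnerRegularWRT.of_pseudoMetrizableSpace (P : Measure X)) hU r hr
        exact lt_of_lt_of_le hrF ((hclosed F hFc).trans (measure_mono hFU))
      have h2 : (Q : Measure X) U ≤ (P : Measure X) U := by
        have hc1 : (P : Measure X) Uᶜ ≤ (Q : Measure X) Uᶜ := hclosed _ hU.isClosed_compl
        have hPu : (P : Measure X) U + (P : Measure X) Uᶜ = 1 := by
          rw [measure_add_measure_compl hU.measurableSet, measure_univ]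
        have hQu : (Q : Measure X) U + (Q : Measure X) Uᶜ = 1 := by
          rw [measure_add_measure_compl hU.measurableSet, measure_univ]
        by_contra hlt
        push_neg at hlt
        have : (1 : ENNReal) < 1 := by
          calc (1 : ENNReal) = (P : Measure X) U + (P : Measure X) Uᶜ := hPu.symm
            _ < (Q : Measure X) U + (Q : Measure X) Uᶜ :=
              ENNReal.add_lt_add_of_lt_of_le (measure_ne_top _ _) hlt hc1
            _ = 1 := hQu
        exact absurd this (lt_irrefl 1)
      exact le_antisymm h1 h2
    -- conclude P = Q
    have hPQ : (P : Measure X) = (Q : Measure X) := by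
      refine MeasureTheory.ext_of_generate_finite {s : Set X | IsOpen s} ?_ ?_ ?_ ?_
      · exact ‹BorelSpace X›.measurable_eq
      · exact fun s hs t ht _ => hs.inter ht
      · exact fun s hs => hopen s hs
      · simp [measure_univ]
    exact ProbabilityMeasure.toMeasure_injective hPQ
  · -- easy direction
    intro hPQ
    subst hPQ
    refine le_antisymm ?_ (zero_le)
    refine iInf_le_of_le P ?_
    rw [(hT0 P P).mpr rfl, (hD0 P P).mpr rfl]
    simp
end

section
/- Let X and Y be Polish spaces, c : X × Y → [0,∞) bounded and uniformly continuous, P a Borel probability measure on X, Q a Borel probability measure on Y, and ε > 0. Then the dual problem sup_{(φ,ψ) ∈ Φ_c} { ∫ φ dP − ε log ∫ e^{−ψ/ε} dQ } admits a maximizer (φ*, ψ*) ∈ Φ_c. Moreover the maximizer is unique up to a constant shift: if (φ₁,ψ₁) and (φ₂,ψ₂) are both maximizers, then there is a constant a ∈ ℝ such that φ₁ = φ₂ − a P-almost surely and ψ₁ = ψ₂ + a Q-almost surely. -/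
open MeasureTheory Filter Topology

/-- The Kullback-Leibler divergence `𝔇_KL(R‖Q) = ∫ log (dR/dQ) dR` if `R ≪ Q`
(and the integral makes sense), and `+∞` otherwise. -/
noncomputable def klDiv {Y : Type*} [MeasurableSpace Y] (R Q : Measure Y) : ENNReal :=
  open Classical in
  if R ≪ Q ∧ Integrable (llr R Q) R then ENNReal.ofReal (integral R (fun y => llr R Q y)) else ⊤

/-- The proximal optimal transport divergence with the KL divergence:
`𝔇^c_{KL,ε}(P‖Q) = inf_R [ T_c(P,R) + ε 𝔇_KL(R‖Q) ]`. -/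
noncomputable def proxOTKL {X Y : Type*} [MeasurableSpace X] [MeasurableSpace Y]
    (c : X × Y → ENNReal) (ε : ℝ) (P : Measure X) (Q : Measure Y) : ENNReal :=
  ⨅ R : ProbabilityMeasure Y,
    transportCost c P (R : Measure Y) + ENNReal.ofReal ε * klDiv (R : Measure Y) Q

/-- The dual objective `J(φ,ψ) = ∫ φ dP − ε log ∫ e^{−ψ/ε} dQ`. -/
noncomputable def dualObj {X Y : Type*} [MeasurableSpace X] [MeasurableSpace Y]
    [TopologicalSpace X] [TopologicalSpace Y]
    (P : Measure X) (Q : Measure Y) (ε : ℝ)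
    (φ : BoundedContinuousFunction X ℝ) (ψ : BoundedContinuousFunction Y ℝ) : ℝ :=
  ∫ x, φ x ∂P - ε * Real.log (∫ y, Real.exp (-(ψ y) / ε) ∂Q)

/-- `(φ,ψ)` is a maximizer of the dual problem over `Φ_c`. -/
def IsDualMaximizer {X Y : Type*} [MeasurableSpace X] [MeasurableSpace Y]
    [TopologicalSpace X] [TopologicalSpace Y]
    (c : X × Y → ℝ) (P : Measure X) (Q : Measure Y) (ε : ℝ)
    (φ : BoundedContinuousFunction X ℝ) (ψ : BoundedContinuousFunction Y ℝ) : Prop :=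
  (∀ x y, φ x + ψ y ≤ c (x, y)) ∧
    ∀ (φ' : BoundedContinuousFunction X ℝ) (ψ' : BoundedContinuousFunction Y ℝ),
      (∀ x y, φ' x + ψ' y ≤ c (x, y)) → dualObj P Q ε φ' ψ' ≤ dualObj P Q ε φ ψ
section Basic
variable {X Y : Type*} [MeasurableSpace X] [MeasurableSpace Y]
    [TopologicalSpace X] [TopologicalSpace Y]
    [OpensMeasurableSpace X] [OpensMeasurableSpace Y]
    (P : Measure X) (Q : Measure Y) [IsProbabilityMeasure P] [IsProbabilityMeasure Q]
    {ε : ℝ}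

lemma exp_comp_le (hε : 0 < ε) (ψ : BoundedContinuousFunction Y ℝ) (y : Y) :
    Real.exp (-(ψ y) / ε) ≤ Real.exp (‖ψ‖ / ε) := by
  have h : -(ψ y) ≤ ‖ψ‖ := (abs_le.1 (ψ.norm_coe_le_norm y)).1 |> neg_le.1
  exact Real.exp_le_exp.2 (by gcongr)

lemma exp_comp_integrable (hε : 0 < ε) (ψ : BoundedContinuousFunction Y ℝ) :
    Integrable (fun y => Real.exp (-(ψ y) / ε)) Q := by
  refine (integrable_const (Real.exp (‖ψ‖ / ε))).mono'
    ((Real.continuous_exp.comp ((ψ.continuous.neg).div_const ε)).aestronglyMeasurable)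
    (ae_of_all _ fun y => ?_)
  rw [Real.norm_eq_abs, abs_of_pos (Real.exp_pos _)]
  exact exp_comp_le hε ψ y

lemma exp_integral_pos (hε : 0 < ε) (ψ : BoundedContinuousFunction Y ℝ) :
    0 < ∫ y, Real.exp (-(ψ y) / ε) ∂Q := by
  have h1 : (0:ℝ) < Real.exp (-(‖ψ‖) / ε) := Real.exp_pos _
  have h2 : ∫ y, Real.exp (-(‖ψ‖) / ε) ∂Q ≤ ∫ y, Real.exp (-(ψ y) / ε) ∂Q := by
    refine integral_mono (integrable_const _) (exp_comp_integrable Q hε ψ) fun y => ?_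
    have h : ψ y ≤ ‖ψ‖ := (abs_le.1 (ψ.norm_coe_le_norm y)).2
    exact Real.exp_le_exp.2 (by gcongr)
  calc (0:ℝ) < Real.exp (-(‖ψ‖)/ε) := h1
    _ = ∫ _y, Real.exp (-(‖ψ‖) / ε) ∂Q := by simp
    _ ≤ _ := h2

/-- Monotonicity of the dual objective. -/
lemma dualObj_mono (hε : 0 < ε) {φ φ' : BoundedContinuousFunction X ℝ}
    {ψ ψ' : BoundedContinuousFunction Y ℝ} (hφ : ∀ x, φ x ≤ φ' x) (hψ : ∀ y, ψ y ≤ ψ' y) :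
    dualObj P Q ε φ ψ ≤ dualObj P Q ε φ' ψ' := by
  unfold dualObj
  have h1 : ∫ x, φ x ∂P ≤ ∫ x, φ' x ∂P :=
    integral_mono (φ.integrable P) (φ'.integrable P) hφ
  have h2 : ∫ y, Real.exp (-(ψ' y) / ε) ∂Q ≤ ∫ y, Real.exp (-(ψ y) / ε) ∂Q := by
    refine integral_mono (exp_comp_integrable Q hε ψ') (exp_comp_integrable Q hε ψ) fun y => ?_
    exact Real.exp_le_exp.2 (by have := hψ y; gcongr <;> linarith)
  have h3 : Real.log (∫ y, Real.exp (-(ψ' y) / ε) ∂Q) ≤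
      Real.log (∫ y, Real.exp (-(ψ y) / ε) ∂Q) :=
    Real.log_le_log (exp_integral_pos Q hε ψ') h2
  nlinarith
/-- Shift invariance. -/
lemma dualObj_shift (hε : 0 < ε) (φ : BoundedContinuousFunction X ℝ)
    (ψ : BoundedContinuousFunction Y ℝ) (a : ℝ) :
    dualObj P Q ε (φ - BoundedContinuousFunction.const X a)
      (ψ + BoundedContinuousFunction.const Y a) = dualObj P Q ε φ ψ := by
  unfold dualObj
  have h1 : ∫ x, (φ - BoundedContinuousFunction.const X a) x ∂P = (∫ x, φ x ∂P) - a := by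
    simp only [BoundedContinuousFunction.coe_sub, Pi.sub_apply,
      BoundedContinuousFunction.const_apply]
    rw [integral_sub (φ.integrable P) (integrable_const a)]
    simp
  have h2 : ∫ y, Real.exp (-((ψ + BoundedContinuousFunction.const Y a) y) / ε) ∂Q
      = Real.exp (-a/ε) * ∫ y, Real.exp (-(ψ y) / ε) ∂Q := by
    rw [← integral_const_mul]
    congr 1 with y
    simp only [BoundedContinuousFunction.coe_add, Pi.add_apply,
      BoundedContinuousFunction.const_apply, ← Real.exp_add]
    ring_nf
  rw [h1, h2, Real.log_mul (Real.exp_ne_zero _) (exp_integral_pos Q hε ψ).ne', Real.log_exp]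
  field_simp
  ring
end Basic

section Bound
variable {X Y : Type*} [MeasurableSpace X] [MeasurableSpace Y]
    [TopologicalSpace X] [TopologicalSpace Y]
    [OpensMeasurableSpace X] [OpensMeasurableSpace Y]
    (P : Measure X) (Q : Measure Y) [IsProbabilityMeasure P] [IsProbabilityMeasure Q]
    {ε : ℝ}

-- mini-Jensen: exp of integral ≤ integral of exp
lemma exp_integral_le {g : Y → ℝ} (hg : Integrable g Q)
    (hge : Integrable (fun y => Real.exp (g y)) Q) :
    Real.exp (∫ y, g y ∂Q) ≤ ∫ y, Real.exp (g y) ∂Q := by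
  set m := ∫ y, g y ∂Q with hm
  have hpt : ∀ y, Real.exp m * (g y - m) + Real.exp m ≤ Real.exp (g y) := by
    intro y
    have h := Real.add_one_le_exp (g y - m)
    have h2 : Real.exp m * ((g y - m) + 1) ≤ Real.exp m * Real.exp (g y - m) :=
      mul_le_mul_of_nonneg_left h (Real.exp_pos m).le
    rw [← Real.exp_add] at h2
    simpa [mul_add, add_sub_cancel] using h2
  have hsub : Integrable (fun y => g y - m) Q := hg.sub (integrable_const m)
  have h1 : Integrable (fun y => Real.exp m * (g y - m)) Q := hsub.const_mul _
  have hint : Integrable (fun y => Real.exp m * (g y - m) + Real.exp m) Q :=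
    h1.add (integrable_const _)
  have hmono := integral_mono hint hge hpt
  have heval : ∫ y, (Real.exp m * (g y - m) + Real.exp m) ∂Q = Real.exp m := by
    rw [integral_add h1 (integrable_const _), integral_const_mul _ _,
      integral_sub hg (integrable_const m)]
    simp [← hm]
  linarith [hmono, heval.symm.le]

/-- If `φ x + ψ y ≤ M` for all `x,y`, the dual objective is at most `M`. -/
lemma dualObj_le_bound (hε : 0 < ε) {M : ℝ} {φ : BoundedContinuousFunction X ℝ}
    {ψ : BoundedContinuousFunction Y ℝ} (h : ∀ x y, φ x + ψ y ≤ M) :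
    dualObj P Q ε φ ψ ≤ M := by
  have hX : Nonempty X := by
    by_contra hX
    simp only [not_nonempty_iff] at hX
    have : P Set.univ = 1 := measure_univ
    rw [Set.univ_eq_empty_iff.mpr hX, measure_empty] at this
    exact one_ne_zero this.symm
  have hjen : Real.exp (∫ y, -(ψ y)/ε ∂Q) ≤ ∫ y, Real.exp (-(ψ y) / ε) ∂Q :=
    exp_integral_le Q ((ψ.integrable Q).neg.div_const ε) (exp_comp_integrable Q hε ψ)
  have hlog : -(∫ y, ψ y ∂Q)/ε ≤ Real.log (∫ y, Real.exp (-(ψ y) / ε) ∂Q) := by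
    have := Real.log_le_log (Real.exp_pos _) hjen
    rw [Real.log_exp] at this
    calc -(∫ y, ψ y ∂Q)/ε = ∫ y, -(ψ y)/ε ∂Q := by
          rw [integral_div, integral_neg]
      _ ≤ _ := this
  have h2 : dualObj P Q ε φ ψ ≤ ∫ x, φ x ∂P + ∫ y, ψ y ∂Q := by
    unfold dualObj
    have := mul_le_mul_of_nonneg_left hlog hε.le
    rw [mul_div_cancel₀ _ hε.ne'] at this
    linarith
  refine h2.trans ?_
  -- ∫ψ dQ ≤ M - φ x for each x, hence ∫φ dP ≤ M - ∫ψ dQ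
  have hψle : ∀ x, ∫ y, ψ y ∂Q ≤ M - φ x := by
    intro x
    calc ∫ y, ψ y ∂Q ≤ ∫ _y, (M - φ x) ∂Q :=
          integral_mono (ψ.integrable Q) (integrable_const _) (fun y => by linarith [h x y])
      _ = M - φ x := by simp
  have hφle : ∫ x, φ x ∂P ≤ ∫ _x, (M - ∫ y, ψ y ∂Q) ∂P :=
    integral_mono (φ.integrable P) (integrable_const _) (fun x => by linarith [hψle x])
  have : ∫ _x, (M - ∫ y, ψ y ∂Q) ∂P = M - ∫ y, ψ y ∂Q := by simp
  linarith
end Bound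

section CS
variable {Z : Type*} [MeasurableSpace Z] (Q : Measure Z)

/-- Elementary Cauchy–Schwarz for integrals, with equality case. -/
lemma cauchy_schwarz_integral {f g : Z → ℝ}
    (hf2 : Integrable (fun y => f y ^ 2) Q) (hg2 : Integrable (fun y => g y ^ 2) Q)
    (hfg : Integrable (fun y => f y * g y) Q)
    (hA : 0 < ∫ y, f y ^ 2 ∂Q) :
    (∫ y, f y * g y ∂Q) ^ 2 ≤ (∫ y, f y ^ 2 ∂Q) * (∫ y, g y ^ 2 ∂Q) ∧
      ((∫ y, f y * g y ∂Q) ^ 2 = (∫ y, f y ^ 2 ∂Q) * (∫ y, g y ^ 2 ∂Q) →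
        ∀ᵐ y ∂Q, g y = ((∫ y, f y * g y ∂Q) / (∫ y, f y ^ 2 ∂Q)) * f y) := by
  set A := ∫ y, f y ^ 2 ∂Q with hAdef
  set B := ∫ y, f y * g y ∂Q with hBdef
  set C := ∫ y, g y ^ 2 ∂Q with hCdef
  set t := B / A with htdef
  have hexp : (fun y => (g y - t * f y) ^ 2)
      = fun y => (g y ^ 2 - (2 * t) * (f y * g y)) + t ^ 2 * (f y ^ 2) := by
    funext y; ring
  have i1 : Integrable (fun y => (2 * t) * (f y * g y)) Q := hfg.const_mul _
  have i2 : Integrable (fun y => g y ^ 2 - (2 * t) * (f y * g y)) Q := hg2.sub i1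
  have i3 : Integrable (fun y => t ^ 2 * (f y ^ 2)) Q := hf2.const_mul _
  have hquadInt : Integrable (fun y => (g y - t * f y) ^ 2) Q := by
    rw [hexp]; exact i2.add i3
  have hval : ∫ y, (g y - t * f y) ^ 2 ∂Q = C - 2 * t * B + t ^ 2 * A := by
    rw [hexp, integral_add i2 i3, integral_sub hg2 i1, integral_const_mul _ _,
      integral_const_mul _ _]
  have h0 : 0 ≤ ∫ y, (g y - t * f y) ^ 2 ∂Q := integral_nonneg fun y => sq_nonneg _
  have hkey : 0 ≤ C - B ^ 2 / A := by
    have : C - 2 * t * B + t ^ 2 * A = C - B ^ 2 / A := by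
      rw [htdef]; field_simp; ring
    linarith [hval ▸ h0, this]
  constructor
  · have h' : B ^ 2 / A ≤ C := by linarith
    have h'' := (div_le_iff₀ hA).mp h'
    linarith [mul_comm C A, h'']
  · intro heq
    have hzero : ∫ y, (g y - t * f y) ^ 2 ∂Q = 0 := by
      rw [hval, htdef]; field_simp; nlinarith [heq]
    have := (integral_eq_zero_iff_of_nonneg (fun y => sq_nonneg (g y - t * f y)) hquadInt).mp hzero
    filter_upwards [this] with y hy
    have h3 : (g y - t * f y) ^ 2 = 0 := hy
    have h4 : g y - t * f y = 0 := by
      exact pow_eq_zero_iff two_ne_zero |>.mp h3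
    rw [htdef] at h4 ⊢
    linarith
end CS

section Uniqueness
variable {X Y : Type*} [MeasurableSpace X] [MeasurableSpace Y]
    [TopologicalSpace X] [TopologicalSpace Y]
    [OpensMeasurableSpace X] [OpensMeasurableSpace Y]
    {c : X × Y → ℝ} {P : Measure X} {Q : Measure Y}
    [IsProbabilityMeasure P] [IsProbabilityMeasure Q] {ε : ℝ}

lemma dual_maximizer_unique (hε : 0 < ε)
    (φ₁ : BoundedContinuousFunction X ℝ) (ψ₁ : BoundedContinuousFunction Y ℝ)
    (φ₂ : BoundedContinuousFunction X ℝ) (ψ₂ : BoundedContinuousFunction Y ℝ)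
    (h1 : IsDualMaximizer c P Q ε φ₁ ψ₁) (h2 : IsDualMaximizer c P Q ε φ₂ ψ₂) :
    ∃ a : ℝ, (∀ᵐ x ∂P, φ₁ x = φ₂ x - a) ∧ (∀ᵐ y ∂Q, ψ₁ y = ψ₂ y + a) := by
  have hJ : dualObj P Q ε φ₁ ψ₁ = dualObj P Q ε φ₂ ψ₂ :=
    le_antisymm (h2.2 φ₁ ψ₁ h1.1) (h1.2 φ₂ ψ₂ h2.1)
  have h2ε : (0:ℝ) < 2 * ε := by linarith
  -- midpoint
  set φm : BoundedContinuousFunction X ℝ := (2⁻¹ : ℝ) • (φ₁ + φ₂) with hφm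
  set ψm : BoundedContinuousFunction Y ℝ := (2⁻¹ : ℝ) • (ψ₁ + ψ₂) with hψm
  have hφmx : ∀ x, φm x = (φ₁ x + φ₂ x) / 2 := by
    intro x
    simp [hφm, BoundedContinuousFunction.coe_smul, BoundedContinuousFunction.coe_add]
    ring
  have hψmy : ∀ y, ψm y = (ψ₁ y + ψ₂ y) / 2 := by
    intro y
    simp [hψm, BoundedContinuousFunction.coe_smul, BoundedContinuousFunction.coe_add]
    ring
  have hmfeas : ∀ x y, φm x + ψm y ≤ c (x, y) := by
    intro x y
    rw [hφmx, hψmy]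
    have := h1.1 x y; have := h2.1 x y
    linarith
  -- Cauchy-Schwarz setup
  set f : Y → ℝ := fun y => Real.exp (-(ψ₁ y) / (2 * ε)) with hf
  set g : Y → ℝ := fun y => Real.exp (-(ψ₂ y) / (2 * ε)) with hg
  have hf2 : ∀ y, f y ^ 2 = Real.exp (-(ψ₁ y) / ε) := by
    intro y; rw [hf, ← Real.exp_nat_mul]; norm_num; ring_nf
  have hg2 : ∀ y, g y ^ 2 = Real.exp (-(ψ₂ y) / ε) := by
    intro y; rw [hg, ← Real.exp_nat_mul]; norm_num; ring_nf
  have hfg : ∀ y, f y * g y = Real.exp (-(ψm y) / ε) := by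
    intro y; rw [hf, hg, ← Real.exp_add, hψmy]; congr 1; field_simp; ring
  have hf2int : Integrable (fun y => f y ^ 2) Q := by
    simp only [hf2]; exact exp_comp_integrable Q hε ψ₁
  have hg2int : Integrable (fun y => g y ^ 2) Q := by
    simp only [hg2]; exact exp_comp_integrable Q hε ψ₂
  have hfgint : Integrable (fun y => f y * g y) Q := by
    simp only [hfg]; exact exp_comp_integrable Q hε ψm
  have hA : 0 < ∫ y, f y ^ 2 ∂Q := by
    simp only [hf2]; exact exp_integral_pos Q hε ψ₁
  have hC : 0 < ∫ y, g y ^ 2 ∂Q := by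
    simp only [hg2]; exact exp_integral_pos Q hε ψ₂
  have hB : 0 < ∫ y, f y * g y ∂Q := by
    simp only [hfg]; exact exp_integral_pos Q hε ψm
  obtain ⟨hcs, hcseq⟩ := cauchy_schwarz_integral Q hf2int hg2int hfgint hA
  set A := ∫ y, f y ^ 2 ∂Q
  set B := ∫ y, f y * g y ∂Q
  set C := ∫ y, g y ^ 2 ∂Q
  -- identify the integrals appearing in dualObj
  have hIA : ∫ y, Real.exp (-(ψ₁ y) / ε) ∂Q = A := by simp only [← hf2]; rfl
  have hIC : ∫ y, Real.exp (-(ψ₂ y) / ε) ∂Q = C := by simp only [← hg2]; rfl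
  have hIB : ∫ y, Real.exp (-(ψm y) / ε) ∂Q = B := by simp only [← hfg]; rfl
  have hφmint : ∫ x, φm x ∂P = ((∫ x, φ₁ x ∂P) + ∫ x, φ₂ x ∂P) / 2 := by
    simp only [hφmx]
    rw [integral_div, integral_add (φ₁.integrable P) (φ₂.integrable P)]
  -- Jm ≤ J₁, giving log B ≥ (log A + log C)/2
  have hJm : dualObj P Q ε φm ψm ≤ dualObj P Q ε φ₁ ψ₁ := h1.2 φm ψm hmfeas
  have hlogB : (Real.log A + Real.log C) / 2 ≤ Real.log B := by
    have e1 : dualObj P Q ε φm ψm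
        = ((∫ x, φ₁ x ∂P) + ∫ x, φ₂ x ∂P) / 2 - ε * Real.log B := by
      unfold dualObj; rw [hφmint, hIB]
    have e2 : dualObj P Q ε φ₁ ψ₁ = (∫ x, φ₁ x ∂P) - ε * Real.log A := by
      unfold dualObj; rw [hIA]
    have e3 : dualObj P Q ε φ₂ ψ₂ = (∫ x, φ₂ x ∂P) - ε * Real.log C := by
      unfold dualObj; rw [hIC]
    have hhalf : dualObj P Q ε φ₁ ψ₁
        = (dualObj P Q ε φ₁ ψ₁ + dualObj P Q ε φ₂ ψ₂) / 2 := by rw [hJ]; ring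
    rw [hhalf, e2, e3] at hJm
    rw [e1] at hJm
    have := hJm
    nlinarith [hε]
  -- combined with CS : B^2 = A * C
  have hBAC : B ^ 2 = A * C := by
    have h1' : Real.log (B ^ 2) ≤ Real.log (A * C) :=
      Real.log_le_log (by positivity) hcs
    have h2' : Real.log (A * C) ≤ Real.log (B ^ 2) := by
      rw [Real.log_mul hA.ne' hC.ne', Real.log_pow]
      push_cast
      linarith
    have : Real.log (B ^ 2) = Real.log (A * C) := le_antisymm h1' h2'
    have := Real.log_injOn_pos (Set.mem_Ioi.mpr (by positivity))
      (Set.mem_Ioi.mpr (by positivity)) this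
    exact this
  -- equality case: g = (B/A) f a.e.
  have hge := hcseq hBAC
  set r := B / A with hr
  have hrpos : 0 < r := div_pos hB hA
  set a := 2 * ε * Real.log r with ha
  have hψae : ∀ᵐ y ∂Q, ψ₁ y = ψ₂ y + a := by
    filter_upwards [hge] with y hy
    have hfy : 0 < f y := Real.exp_pos _
    have : Real.log (g y) = Real.log r + Real.log (f y) := by
      rw [hy, Real.log_mul hrpos.ne' hfy.ne']
    rw [hf, hg, Real.log_exp, Real.log_exp] at this
    have hthis : -(ψ₂ y) / (2*ε) = Real.log r + -(ψ₁ y) / (2*ε) := this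
    have h2ε0 : (2*ε) ≠ 0 := by positivity
    have h' := congrArg (fun t => t * (2*ε)) hthis
    simp only [add_mul, div_mul_cancel₀ _ h2ε0] at h'
    rw [ha]; linarith
  -- first direction: φ₂ - a ≤ φ₁ a.e.
  have dir : ∀ (φ φ' : BoundedContinuousFunction X ℝ) (ψ ψ' : BoundedContinuousFunction Y ℝ)
      (b : ℝ), IsDualMaximizer c P Q ε φ ψ → (∀ x y, φ' x + ψ' y ≤ c (x, y)) →
      (∀ᵐ y ∂Q, ψ y = ψ' y + b) → ∀ᵐ x ∂P, φ' x - b ≤ φ x := by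
    intro φ φ' ψ ψ' b hmax hfeas' hψb
    set F : BoundedContinuousFunction X ℝ := φ ⊔ (φ' - BoundedContinuousFunction.const X b)
      with hF
    set G : BoundedContinuousFunction Y ℝ := ψ ⊓ (ψ' + BoundedContinuousFunction.const Y b)
      with hG
    have hFx : ∀ x, F x = max (φ x) (φ' x - b) := fun x => rfl
    have hGy : ∀ y, G y = min (ψ y) (ψ' y + b) := fun y => rfl
    have hFG : ∀ x y, F x + G y ≤ c (x, y) := by
      intro x y
      rw [hFx, hGy]
      rcases max_cases (φ x) (φ' x - b) with ⟨he, _⟩ | ⟨he, _⟩ <;> rw [he]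
      · have := hmax.1 x y
        have := min_le_left (ψ y) (ψ' y + b)
        linarith
      · have := hfeas' x y
        have := min_le_right (ψ y) (ψ' y + b)
        linarith
    have hGae : ∀ᵐ y ∂Q, G y = ψ y := by
      filter_upwards [hψb] with y hy
      rw [hGy, hy, min_self]
    have hlogeq : ∫ y, Real.exp (-(G y) / ε) ∂Q = ∫ y, Real.exp (-(ψ y) / ε) ∂Q := by
      refine integral_congr_ae ?_
      filter_upwards [hGae] with y hy
      rw [hy]
    have hJle := hmax.2 F G hFG
    unfold dualObj at hJle
    rw [hlogeq] at hJle
    have hintle : ∫ x, F x ∂P ≤ ∫ x, φ x ∂P := by linarith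
    have hnn : ∀ x, 0 ≤ F x - φ x := by
      intro x; rw [hFx]; have := le_max_left (φ x) (φ' x - b); linarith
    have hsubint : Integrable (fun x => F x - φ x) P :=
      (F.integrable P).sub (φ.integrable P)
    have hz : ∫ x, (F x - φ x) ∂P = 0 := by
      have h1' : ∫ x, (F x - φ x) ∂P = ∫ x, F x ∂P - ∫ x, φ x ∂P :=
        integral_sub (F.integrable P) (φ.integrable P)
      have h2' : 0 ≤ ∫ x, (F x - φ x) ∂P := integral_nonneg hnn
      linarith
    have := (integral_eq_zero_iff_of_nonneg hnn hsubint).mp hz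
    filter_upwards [this] with x hx
    have hx' : F x - φ x = 0 := hx
    rw [hFx] at hx'
    have : max (φ x) (φ' x - b) = φ x := by linarith
    exact max_eq_left_iff.mp this
  have hd1 : ∀ᵐ x ∂P, φ₂ x - a ≤ φ₁ x := dir φ₁ φ₂ ψ₁ ψ₂ a h1 h2.1 hψae
  have hψae' : ∀ᵐ y ∂Q, ψ₂ y = ψ₁ y + (-a) := by
    filter_upwards [hψae] with y hy; linarith
  have hd2 : ∀ᵐ x ∂P, φ₁ x - (-a) ≤ φ₂ x := dir φ₂ φ₁ ψ₂ ψ₁ (-a) h2 h1.1 hψae'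
  refine ⟨a, ?_, hψae⟩
  filter_upwards [hd1, hd2] with x hx1 hx2
  linarith
end Uniqueness

section ModTrans

/-- A uniform modulus-of-continuity property with gauge `η`. -/
def IsMod {A : Type*} [PseudoMetricSpace A] (η : ℝ → ℝ) (f : A → ℝ) : Prop :=
  ∀ δ, 0 < δ → ∀ x x', dist x x' < η δ → |f x - f x'| ≤ δ

lemma IsMod.uniformContinuous {A : Type*} [PseudoMetricSpace A] {η : ℝ → ℝ} {f : A → ℝ}
    (hη : ∀ δ, 0 < δ → 0 < η δ) (hf : IsMod η f) : UniformContinuous f := by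
  refine Metric.uniformContinuous_iff.2 fun δ hδ => ⟨η (δ/2), hη _ (by linarith), fun a b h => ?_⟩
  have := hf (δ/2) (by linarith) a b h
  rw [Real.dist_eq]; linarith

/-- The `c`-infimum transform `g ↦ (a ↦ ⨅ b, k a b - g b)`. -/
noncomputable def infTrans {A B : Type*} (k : A → B → ℝ) (g : B → ℝ) : A → ℝ :=
  fun a => ⨅ b, (k a b - g b)

variable {A B : Type*} [Nonempty B] {k : A → B → ℝ} {g : B → ℝ} {M Cg : ℝ}
  (hk1 : ∀ a b, 0 ≤ k a b) (hk2 : ∀ a b, k a b ≤ M) (hg : ∀ b, |g b| ≤ Cg)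

include hg in
lemma infTrans_bddBelow (hk1 : ∀ a b, 0 ≤ k a b) (a : A) :
    BddBelow (Set.range fun b => k a b - g b) := by
  refine ⟨-Cg, fun v hv => ?_⟩
  obtain ⟨b, rfl⟩ := hv
  dsimp only
  have := hk1 a b; have := (abs_le.1 (hg b)).2
  linarith

include hg hk1 in
lemma infTrans_le (a : A) (b : B) : infTrans k g a ≤ k a b - g b :=
  ciInf_le (infTrans_bddBelow hg hk1 a) b

lemma le_infTrans {v : ℝ} {a : A} (h : ∀ b, v ≤ k a b - g b) : v ≤ infTrans k g a :=
  le_ciInf h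

include hk1 hg in
lemma infTrans_lb (a : A) : -Cg ≤ infTrans k g a :=
  le_infTrans fun b => by have := hk1 a b; have := (abs_le.1 (hg b)).2; linarith

include hk1 hk2 hg in
lemma infTrans_ub (a : A) : infTrans k g a ≤ M + Cg := by
  obtain ⟨b⟩ := (inferInstance : Nonempty B)
  have h1 : infTrans k g a ≤ k a b - g b := infTrans_le hk1 hg a b
  have := hk2 a b; have := (abs_le.1 (hg b)).1
  linarith

include hk1 hg in
lemma infTrans_mod [PseudoMetricSpace A] {η : ℝ → ℝ}
    (hkmod : ∀ δ, 0 < δ → ∀ a a' b, dist a a' < η δ → |k a b - k a' b| ≤ δ) :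
    IsMod η (infTrans k g) := by
  intro δ hδ x x' hd
  have key : ∀ (u u' : A), dist u u' < η δ → infTrans k g u ≤ infTrans k g u' + δ := by
    intro u u' hduu
    have : infTrans k g u - δ ≤ infTrans k g u' := by
      refine le_infTrans fun b => ?_
      have h1 : infTrans k g u ≤ k u b - g b := infTrans_le hk1 hg u b
      have h2 := (abs_le.1 (hkmod δ hδ u u' b hduu)).2
      linarith
    linarith
  have h1 := key x x' hd
  have h2 := key x' x (by rwa [dist_comm])
  rw [abs_le]; constructor <;> linarith

end ModTrans

section Normalize
variable {X Y : Type*} [MetricSpace X] [MetricSpace Y]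
    [MeasurableSpace X] [BorelSpace X] [MeasurableSpace Y] [BorelSpace Y]
    {c : X × Y → ℝ} {M₀ : ℝ} {η : ℝ → ℝ}
    {P : Measure X} {Q : Measure Y} [IsProbabilityMeasure P] [IsProbabilityMeasure Q] {ε : ℝ}

lemma normalize_pair [Nonempty X] [Nonempty Y]
    (hc1 : ∀ z, 0 ≤ c z) (hc2 : ∀ z, c z ≤ M₀)
    (hηpos : ∀ δ, 0 < δ → 0 < η δ)
    (hηX : ∀ δ, 0 < δ → ∀ x x' y, dist x x' < η δ → |c (x,y) - c (x',y)| ≤ δ)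
    (hηY : ∀ δ, 0 < δ → ∀ y y' x, dist y y' < η δ → |c (x,y) - c (x,y')| ≤ δ)
    (hε : 0 < ε)
    (φ : BoundedContinuousFunction X ℝ) (ψ : BoundedContinuousFunction Y ℝ)
    (hfeas : ∀ x y, φ x + ψ y ≤ c (x,y)) :
    ∃ (φ' : BoundedContinuousFunction X ℝ) (ψ' : BoundedContinuousFunction Y ℝ),
      (∀ x y, φ' x + ψ' y ≤ c (x, y)) ∧
      dualObj P Q ε φ ψ ≤ dualObj P Q ε φ' ψ' ∧
      (∀ x, φ' x ∈ Set.Icc (-M₀) M₀) ∧ (∀ y, ψ' y ∈ Set.Icc (-M₀) M₀) ∧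
      IsMod η ⇑φ' ∧ IsMod η ⇑ψ' := by
  obtain ⟨x₀⟩ := (inferInstance : Nonempty X)
  obtain ⟨y₀⟩ := (inferInstance : Nonempty Y)
  have hM₀ : 0 ≤ M₀ := le_trans (hc1 (x₀, y₀)) (hc2 (x₀, y₀))
  set kY : Y → X → ℝ := fun y x => c (x, y) with hkY
  set kX : X → Y → ℝ := fun x y => c (x, y) with hkX
  have hk1Y : ∀ y x, 0 ≤ kY y x := fun y x => hc1 _
  have hk2Y : ∀ y x, kY y x ≤ M₀ := fun y x => hc2 _
  have hk1X : ∀ x y, 0 ≤ kX x y := fun x y => hc1 _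
  have hk2X : ∀ x y, kX x y ≤ M₀ := fun x y => hc2 _
  have hkYmod : ∀ δ, 0 < δ → ∀ y y' x, dist y y' < η δ → |kY y x - kY y' x| ≤ δ :=
    fun δ hδ y y' x h => hηY δ hδ y y' x h
  have hkXmod : ∀ δ, 0 < δ → ∀ x x' y, dist x x' < η δ → |kX x y - kX x' y| ≤ δ :=
    fun δ hδ x x' y h => hηX δ hδ x x' y h
  have hgφ : ∀ x, |φ x| ≤ ‖φ‖ := fun x => by
    have := φ.norm_coe_le_norm x; rwa [Real.norm_eq_abs] at this
  have hnφ : 0 ≤ ‖φ‖ := norm_nonneg _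
  -- first transform
  set ψ₁ : Y → ℝ := infTrans kY ⇑φ with hψ₁
  have hψ₁le : ∀ y x, ψ₁ y ≤ c (x, y) - φ x := fun y x => infTrans_le hk1Y hgφ y x
  have hψψ₁ : ∀ y, ψ y ≤ ψ₁ y := fun y =>
    le_infTrans fun x => by have := hfeas x y; linarith
  have hψ₁lb : ∀ y, -‖φ‖ ≤ ψ₁ y := fun y => infTrans_lb hk1Y hgφ y
  have hψ₁ub : ∀ y, ψ₁ y ≤ M₀ + ‖φ‖ := fun y => infTrans_ub hk1Y hk2Y hgφ y
  have hgψ₁ : ∀ y, |ψ₁ y| ≤ M₀ + ‖φ‖ := fun y =>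
    abs_le.2 ⟨by have := hψ₁lb y; linarith, hψ₁ub y⟩
  -- second transform
  set φ₁ : X → ℝ := infTrans kX ψ₁ with hφ₁
  have hφ₁le : ∀ x y, φ₁ x ≤ c (x, y) - ψ₁ y := fun x y => infTrans_le hk1X hgψ₁ x y
  have hφφ₁ : ∀ x, φ x ≤ φ₁ x := fun x =>
    le_infTrans fun y => by have := hψ₁le y x; linarith
  have hφ₁lb : ∀ x, -(M₀ + ‖φ‖) ≤ φ₁ x := fun x => infTrans_lb hk1X hgψ₁ x
  have hmodφ₁ : IsMod η φ₁ := infTrans_mod hk1X hgψ₁ hkXmod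
  -- the shift constant
  have hbddφ₁ : BddBelow (Set.range φ₁) := ⟨-(M₀ + ‖φ‖), by
    rintro v ⟨x, rfl⟩; exact hφ₁lb x⟩
  set a : ℝ := ⨅ x, φ₁ x with ha
  have ha_le : ∀ x, a ≤ φ₁ x := fun x => ciInf_le hbddφ₁ x
  have hle_a : ∀ x, φ₁ x - M₀ ≤ a := by
    intro x
    refine le_ciInf fun x'' => ?_
    refine le_infTrans fun y => ?_
    have h1 := hφ₁le x y
    have h2 := hc2 (x, y)
    have h3 := hc1 (x'', y)
    simp only [hkX]
    linarith
  -- normalized potentials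
  set φ₂ : X → ℝ := fun x => φ₁ x - a with hφ₂
  have h0φ₂ : ∀ x, 0 ≤ φ₂ x := fun x => by have := ha_le x; simp [hφ₂]; linarith
  have hφ₂M : ∀ x, φ₂ x ≤ M₀ := fun x => by have := hle_a x; simp [hφ₂]; linarith
  have hmodφ₂ : IsMod η φ₂ := by
    intro δ hδ x x' h
    have := hmodφ₁ δ hδ x x' h
    simpa [hφ₂] using this
  have hgφ₂ : ∀ x, |φ₂ x| ≤ M₀ := fun x => abs_le.2 ⟨by have := h0φ₂ x; linarith, hφ₂M x⟩
  set ψ₃ : Y → ℝ := infTrans kY φ₂ with hψ₃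
  have hψ₃le : ∀ y x, ψ₃ y ≤ c (x, y) - φ₂ x := fun y x => infTrans_le hk1Y hgφ₂ y x
  have hψ₃lb : ∀ y, -M₀ ≤ ψ₃ y := fun y => infTrans_lb hk1Y hgφ₂ y
  have hψ₃ub : ∀ y, ψ₃ y ≤ M₀ := fun y => by
    have h1 := hψ₃le y x₀
    have h2 := hc2 (x₀, y)
    have h3 := h0φ₂ x₀
    linarith
  have hmodψ₃ : IsMod η ψ₃ := infTrans_mod hk1Y hgφ₂ hkYmod
  have hψ₁ψ₃ : ∀ y, ψ₁ y + a ≤ ψ₃ y := fun y =>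
    le_infTrans fun x => by have := hφ₁le x y; simp only [hkY, hφ₂]; linarith
  -- build BCFs
  have hcontφ₂ : Continuous φ₂ := (hmodφ₂.uniformContinuous hηpos).continuous
  have hcontψ₃ : Continuous ψ₃ := (hmodψ₃.uniformContinuous hηpos).continuous
  set φ' : BoundedContinuousFunction X ℝ :=
    BoundedContinuousFunction.mkOfBound ⟨φ₂, hcontφ₂⟩ (2*M₀) (by
      intro x x'
      show dist (φ₂ x) (φ₂ x') ≤ 2*M₀
      rw [Real.dist_eq]
      have := h0φ₂ x; have := hφ₂M x; have := h0φ₂ x'; have := hφ₂M x'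
      rw [abs_le]; constructor <;> linarith) with hφ'
  set ψ' : BoundedContinuousFunction Y ℝ :=
    BoundedContinuousFunction.mkOfBound ⟨ψ₃, hcontψ₃⟩ (2*M₀) (by
      intro y y'
      show dist (ψ₃ y) (ψ₃ y') ≤ 2*M₀
      rw [Real.dist_eq]
      have := hψ₃lb y; have := hψ₃ub y; have := hψ₃lb y'; have := hψ₃ub y'
      rw [abs_le]; constructor <;> linarith) with hψ'
  have hφ'x : ∀ x, φ' x = φ₂ x := fun x => rfl
  have hψ'y : ∀ y, ψ' y = ψ₃ y := fun y => rfl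
  refine ⟨φ', ψ', fun x y => ?_, ?_, fun x => ?_, fun y => ?_, ?_, ?_⟩
  · rw [hφ'x, hψ'y]; have := hψ₃le y x; linarith
  · -- the dual objective improves
    have hmono : dualObj P Q ε φ ψ ≤ dualObj P Q ε
        (φ' + BoundedContinuousFunction.const X a)
        (ψ' - BoundedContinuousFunction.const Y a) := by
      refine dualObj_mono P Q hε (fun x => ?_) (fun y => ?_)
      · have h1 := hφφ₁ x
        simp only [BoundedContinuousFunction.coe_add, Pi.add_apply,
          BoundedContinuousFunction.const_apply, hφ'x]
        simp only [hφ₂]; linarith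
      · have h1 := hψψ₁ y; have h2 := hψ₁ψ₃ y
        simp only [BoundedContinuousFunction.coe_sub, Pi.sub_apply,
          BoundedContinuousFunction.const_apply, hψ'y]
        linarith
    have hshift := dualObj_shift P Q hε
      (φ' + BoundedContinuousFunction.const X a)
      (ψ' - BoundedContinuousFunction.const Y a) a
    rw [add_sub_cancel_right] at hshift
    rw [sub_add_cancel] at hshift
    linarith
  · exact ⟨by have := h0φ₂ x; rw [hφ'x]; linarith, by rw [hφ'x]; exact hφ₂M x⟩
  · exact ⟨by rw [hψ'y]; exact hψ₃lb y, by rw [hψ'y]; exact hψ₃ub y⟩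
  · intro δ hδ x x' h; rw [hφ'x, hφ'x]; exact hmodφ₂ δ hδ x x' h
  · intro δ hδ y y' h; rw [hψ'y, hψ'y]; exact hmodψ₃ δ hδ y y' h
end Normalize

section Existence

lemma nonempty_of_prob {Z : Type*} [MeasurableSpace Z] (μ : Measure Z)
    [IsProbabilityMeasure μ] : Nonempty Z := by
  by_contra h
  simp only [not_nonempty_iff] at h
  have h1 : μ Set.univ = 1 := measure_univ
  rw [Set.univ_eq_empty_iff.mpr h, measure_empty] at h1
  exact one_ne_zero h1.symm

lemma dual_maximizer_exists
    {X Y : Type*} [MetricSpace X] [CompleteSpace X] [TopologicalSpace.SeparableSpace X]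
    [MeasurableSpace X] [BorelSpace X]
    [MetricSpace Y] [CompleteSpace Y] [TopologicalSpace.SeparableSpace Y]
    [MeasurableSpace Y] [BorelSpace Y]
    (c : X × Y → ℝ) (hc_nonneg : ∀ z, 0 ≤ c z) (hc_bdd : ∃ M, ∀ z, c z ≤ M)
    (hc_uc : UniformContinuous c)
    (P : Measure X) (Q : Measure Y) [IsProbabilityMeasure P] [IsProbabilityMeasure Q]
    (ε : ℝ) (hε : 0 < ε) :
    ∃ (φs : BoundedContinuousFunction X ℝ) (ψs : BoundedContinuousFunction Y ℝ),
      IsDualMaximizer c P Q ε φs ψs := by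
  haveI hXne : Nonempty X := nonempty_of_prob P
  haveI hYne : Nonempty Y := nonempty_of_prob Q
  have x₀ : X := Classical.arbitrary X
  have y₀ : Y := Classical.arbitrary Y
  -- modulus of continuity
  have hmod : ∀ δ : ℝ, 0 < δ → ∃ θ > 0, ∀ z z' : X × Y, dist z z' < θ → |c z - c z'| ≤ δ := by
    intro δ hδ
    obtain ⟨θ, hθ, h⟩ := Metric.uniformContinuous_iff.mp hc_uc δ hδ
    exact ⟨θ, hθ, fun z z' hzz => by
      have := h hzz; rw [Real.dist_eq] at this; exact this.le⟩
  set η : ℝ → ℝ := fun δ => if h : 0 < δ then (hmod δ h).choose else 1 with hηdef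
  have hηpos : ∀ δ, 0 < δ → 0 < η δ := by
    intro δ hδ
    simp only [hηdef, dif_pos hδ]
    exact (hmod δ hδ).choose_spec.1
  have hηspec : ∀ δ, 0 < δ → ∀ z z' : X × Y, dist z z' < η δ → |c z - c z'| ≤ δ := by
    intro δ hδ
    simp only [hηdef, dif_pos hδ]
    exact (hmod δ hδ).choose_spec.2
  have hηX : ∀ δ, 0 < δ → ∀ x x' y, dist x x' < η δ → |c (x,y) - c (x',y)| ≤ δ := by
    intro δ hδ x x' y h
    refine hηspec δ hδ (x,y) (x',y) ?_
    rw [Prod.dist_eq]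
    simp only [dist_self]
    rwa [max_eq_left dist_nonneg]
  have hηY : ∀ δ, 0 < δ → ∀ y y' x, dist y y' < η δ → |c (x,y) - c (x,y')| ≤ δ := by
    intro δ hδ y y' x h
    refine hηspec δ hδ (x,y) (x,y') ?_
    rw [Prod.dist_eq]
    simp only [dist_self]
    rwa [max_eq_right dist_nonneg]
  -- feasible set and value
  obtain ⟨M₀, hM₀⟩ := hc_bdd
  have hM₀0 : 0 ≤ M₀ := le_trans (hc_nonneg (x₀,y₀)) (hM₀ _)
  set Feas : Set (BoundedContinuousFunction X ℝ × BoundedContinuousFunction Y ℝ) :=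
    {p | ∀ x y, p.1 x + p.2 y ≤ c (x, y)} with hFeasdef
  set Jf : BoundedContinuousFunction X ℝ × BoundedContinuousFunction Y ℝ → ℝ :=
    fun p => dualObj P Q ε p.1 p.2 with hJfdef
  have h0mem : ((0 : BoundedContinuousFunction X ℝ),
      (0 : BoundedContinuousFunction Y ℝ)) ∈ Feas := by
    intro x y
    simp only [BoundedContinuousFunction.coe_zero, Pi.zero_apply, add_zero]
    exact hc_nonneg _
  have hSne : (Jf '' Feas).Nonempty := ⟨_, ⟨_, h0mem, rfl⟩⟩
  have hSbdd : BddAbove (Jf '' Feas) := ⟨M₀, by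
    rintro v ⟨q, hq, rfl⟩
    exact dualObj_le_bound P Q hε (fun x y => le_trans (hq x y) (hM₀ _))⟩
  set S := sSup (Jf '' Feas) with hSdef
  obtain ⟨u, hu_mono, hu_tend, hu_mem⟩ := exists_seq_tendsto_sSup hSne hSbdd
  choose p hp_mem hp_val using hu_mem
  -- normalize the maximizing sequence
  have hnorm := fun n => normalize_pair (P := P) (Q := Q) hc_nonneg hM₀ hηpos hηX hηY hε
    (p n).1 (p n).2 (hp_mem n)
  choose Φ Ψ hfeasn hJn hΦmem hΨmem hΦmod hΨmod using hnorm
  have hJle : ∀ n, dualObj P Q ε (Φ n) (Ψ n) ≤ S := fun n =>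
    le_csSup hSbdd ⟨(Φ n, Ψ n), hfeasn n, rfl⟩
  have hJge : ∀ n, u n ≤ dualObj P Q ε (Φ n) (Ψ n) := fun n => by
    calc u n = Jf (p n) := (hp_val n).symm
      _ ≤ _ := hJn n
  have hJtend : Tendsto (fun n => dualObj P Q ε (Φ n) (Ψ n)) atTop (𝓝 S) :=
    tendsto_of_tendsto_of_tendsto_of_le_of_le hu_tend tendsto_const_nhds hJge hJle
  -- extract a subsequence converging on countable dense sets
  obtain ⟨uX, huX⟩ := TopologicalSpace.exists_dense_seq X
  obtain ⟨uY, huY⟩ := TopologicalSpace.exists_dense_seq Y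
  set Zc := (ℕ → Set.Icc (-M₀:ℝ) M₀) × (ℕ → Set.Icc (-M₀:ℝ) M₀) with hZc
  set F : ℕ → Zc := fun n =>
    (fun k => ⟨Φ n (uX k), hΦmem n (uX k)⟩, fun k => ⟨Ψ n (uY k), hΨmem n (uY k)⟩) with hFdef
  obtain ⟨L, -, σ, hσ, hσtend⟩ :=
    IsCompact.tendsto_subseq (x := F) isCompact_univ (fun n => Set.mem_univ _)
  have hconvX : ∀ k, Tendsto (fun n => Φ (σ n) (uX k)) atTop (𝓝 ((L.1 k : ℝ))) := by
    intro k
    have hcont : Continuous (fun z : Zc => ((z.1 k : ℝ))) :=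
      continuous_subtype_val.comp ((continuous_apply k).comp continuous_fst)
    exact (hcont.continuousAt (x := L)).tendsto.comp hσtend
  have hconvY : ∀ k, Tendsto (fun n => Ψ (σ n) (uY k)) atTop (𝓝 ((L.2 k : ℝ))) := by
    intro k
    have hcont : Continuous (fun z : Zc => ((z.2 k : ℝ))) :=
      continuous_subtype_val.comp ((continuous_apply k).comp continuous_snd)
    exact (hcont.continuousAt (x := L)).tendsto.comp hσtend
  -- pointwise Cauchy everywhere
  have habs3 : ∀ (a b c' : ℝ), |a - c'| ≤ |a - b| + |b - c'| := fun a b c' => abs_sub_le a b c'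
  have hcauchyX : ∀ x : X, CauchySeq (fun n => Φ (σ n) x) := by
    intro x
    rw [Metric.cauchySeq_iff]
    intro δ hδ
    have hδ4 : 0 < δ/4 := by linarith
    obtain ⟨k, hk⟩ := (Metric.denseRange_iff.mp huX) x (η (δ/4)) (hηpos _ hδ4)
    have hC := (hconvX k).cauchySeq
    rw [Metric.cauchySeq_iff] at hC
    obtain ⟨N, hN⟩ := hC (δ/4) hδ4
    refine ⟨N, fun m hm n hn => ?_⟩
    have h1 := hΦmod (σ m) (δ/4) hδ4 x (uX k) hk
    have h2 := hΦmod (σ n) (δ/4) hδ4 x (uX k) hk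
    have h3 := hN m hm n hn
    rw [Real.dist_eq] at h3 ⊢
    have t1 := habs3 (Φ (σ m) x) (Φ (σ m) (uX k)) (Φ (σ n) x)
    have t2 := habs3 (Φ (σ m) (uX k)) (Φ (σ n) (uX k)) (Φ (σ n) x)
    have h2' : |Φ (σ n) (uX k) - Φ (σ n) x| ≤ δ/4 := by rwa [abs_sub_comm] at h2
    linarith
  have hcauchyY : ∀ y : Y, CauchySeq (fun n => Ψ (σ n) y) := by
    intro y
    rw [Metric.cauchySeq_iff]
    intro δ hδ
    have hδ4 : 0 < δ/4 := by linarith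
    obtain ⟨k, hk⟩ := (Metric.denseRange_iff.mp huY) y (η (δ/4)) (hηpos _ hδ4)
    have hC := (hconvY k).cauchySeq
    rw [Metric.cauchySeq_iff] at hC
    obtain ⟨N, hN⟩ := hC (δ/4) hδ4
    refine ⟨N, fun m hm n hn => ?_⟩
    have h1 := hΨmod (σ m) (δ/4) hδ4 y (uY k) hk
    have h2 := hΨmod (σ n) (δ/4) hδ4 y (uY k) hk
    have h3 := hN m hm n hn
    rw [Real.dist_eq] at h3 ⊢
    have t1 := habs3 (Ψ (σ m) y) (Ψ (σ m) (uY k)) (Ψ (σ n) y)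
    have t2 := habs3 (Ψ (σ m) (uY k)) (Ψ (σ n) (uY k)) (Ψ (σ n) y)
    have h2' : |Ψ (σ n) (uY k) - Ψ (σ n) y| ≤ δ/4 := by rwa [abs_sub_comm] at h2
    linarith
  -- pointwise limits
  set φstar : X → ℝ := fun x => limUnder atTop (fun n => Φ (σ n) x) with hφstardef
  have hφconv : ∀ x, Tendsto (fun n => Φ (σ n) x) atTop (𝓝 (φstar x)) := fun x =>
    (hcauchyX x).tendsto_limUnder
  set ψstar : Y → ℝ := fun y => limUnder atTop (fun n => Ψ (σ n) y) with hψstardef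
  have hψconv : ∀ y, Tendsto (fun n => Ψ (σ n) y) atTop (𝓝 (ψstar y)) := fun y =>
    (hcauchyY y).tendsto_limUnder
  -- properties of the limits
  have hφmem : ∀ x, φstar x ∈ Set.Icc (-M₀) M₀ := fun x =>
    ⟨ge_of_tendsto (hφconv x) (Eventually.of_forall fun n => (hΦmem _ x).1),
     le_of_tendsto (hφconv x) (Eventually.of_forall fun n => (hΦmem _ x).2)⟩
  have hψmem : ∀ y, ψstar y ∈ Set.Icc (-M₀) M₀ := fun y =>
    ⟨ge_of_tendsto (hψconv y) (Eventually.of_forall fun n => (hΨmem _ y).1),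
     le_of_tendsto (hψconv y) (Eventually.of_forall fun n => (hΨmem _ y).2)⟩
  have hφmod : IsMod η φstar := by
    intro δ hδ x x' h
    have ht : Tendsto (fun n => |Φ (σ n) x - Φ (σ n) x'|) atTop (𝓝 |φstar x - φstar x'|) :=
      ((hφconv x).sub (hφconv x')).abs
    exact le_of_tendsto ht (Eventually.of_forall fun n => hΦmod (σ n) δ hδ x x' h)
  have hψmod : IsMod η ψstar := by
    intro δ hδ y y' h
    have ht : Tendsto (fun n => |Ψ (σ n) y - Ψ (σ n) y'|) atTop (𝓝 |ψstar y - ψstar y'|) :=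
      ((hψconv y).sub (hψconv y')).abs
    exact le_of_tendsto ht (Eventually.of_forall fun n => hΨmod (σ n) δ hδ y y' h)
  have hφcont : Continuous φstar := (hφmod.uniformContinuous hηpos).continuous
  have hψcont : Continuous ψstar := (hψmod.uniformContinuous hηpos).continuous
  set Φs : BoundedContinuousFunction X ℝ :=
    BoundedContinuousFunction.mkOfBound ⟨φstar, hφcont⟩ (2*M₀) (by
      intro x x'
      show dist (φstar x) (φstar x') ≤ 2*M₀
      rw [Real.dist_eq]
      have h1 := hφmem x; have h2 := hφmem x'
      rw [abs_le]
      constructor <;> [linarith [h1.1, h2.2]; linarith [h1.2, h2.1]]) with hΦs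
  set Ψs : BoundedContinuousFunction Y ℝ :=
    BoundedContinuousFunction.mkOfBound ⟨ψstar, hψcont⟩ (2*M₀) (by
      intro y y'
      show dist (ψstar y) (ψstar y') ≤ 2*M₀
      rw [Real.dist_eq]
      have h1 := hψmem y; have h2 := hψmem y'
      rw [abs_le]
      constructor <;> [linarith [h1.1, h2.2]; linarith [h1.2, h2.1]]) with hΨs
  have hΦsx : ∀ x, Φs x = φstar x := fun x => rfl
  have hΨsy : ∀ y, Ψs y = ψstar y := fun y => rfl
  have hfeas_star : ∀ x y, Φs x + Ψs y ≤ c (x, y) := by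
    intro x y
    rw [hΦsx, hΨsy]
    exact le_of_tendsto ((hφconv x).add (hψconv y))
      (Eventually.of_forall fun n => hfeasn (σ n) x y)
  -- convergence of the dual objective
  have hint1 : Tendsto (fun n => ∫ x, Φ (σ n) x ∂P) atTop (𝓝 (∫ x, φstar x ∂P)) := by
    refine tendsto_integral_of_dominated_convergence (fun _ => M₀)
      (fun n => (Φ (σ n)).continuous.aestronglyMeasurable) (integrable_const _)
      (fun n => Eventually.of_forall fun x => ?_) (Eventually.of_forall fun x => hφconv x)
    rw [Real.norm_eq_abs, abs_le]
    exact ⟨by linarith [(hΦmem (σ n) x).1], (hΦmem (σ n) x).2⟩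
  have hint2 : Tendsto (fun n => ∫ y, Real.exp (-(Ψ (σ n) y)/ε) ∂Q) atTop
      (𝓝 (∫ y, Real.exp (-(ψstar y)/ε) ∂Q)) := by
    refine tendsto_integral_of_dominated_convergence (fun _ => Real.exp (M₀/ε))
      (fun n => (Real.continuous_exp.comp
        (((Ψ (σ n)).continuous.neg).div_const ε)).aestronglyMeasurable)
      (integrable_const _) (fun n => Eventually.of_forall fun y => ?_)
      (Eventually.of_forall fun y => ?_)
    · rw [Real.norm_eq_abs, abs_of_pos (Real.exp_pos _)]
      refine Real.exp_le_exp.2 ?_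
      have h1 := (hΨmem (σ n) y).1
      gcongr
      linarith
    · exact (Real.continuous_exp.tendsto _).comp (((hψconv y).neg).div_const ε)
  have hpos : 0 < ∫ y, Real.exp (-(Ψs y)/ε) ∂Q := exp_integral_pos Q hε Ψs
  have hpos' : (∫ y, Real.exp (-(ψstar y)/ε) ∂Q) ≠ 0 := ne_of_gt hpos
  have hJconv : Tendsto (fun n => dualObj P Q ε (Φ (σ n)) (Ψ (σ n))) atTop
      (𝓝 (dualObj P Q ε Φs Ψs)) := by
    have hlim : Tendsto (fun n => Real.log (∫ y, Real.exp (-(Ψ (σ n) y)/ε) ∂Q)) atTop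
        (𝓝 (Real.log (∫ y, Real.exp (-(ψstar y)/ε) ∂Q))) :=
      ((Real.continuousAt_log hpos').tendsto).comp hint2
    unfold dualObj
    exact hint1.sub (tendsto_const_nhds.mul hlim)
  have hJS : dualObj P Q ε Φs Ψs = S :=
    tendsto_nhds_unique hJconv (hJtend.comp (hσ.tendsto_atTop))
  refine ⟨Φs, Ψs, hfeas_star, fun φ' ψ' hf => ?_⟩
  rw [hJS]
  exact le_csSup hSbdd ⟨(φ', ψ'), hf, rfl⟩

end Existence

/-- For a bounded uniformly continuous cost on Polish metric spaces, the dual problem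
admits a maximizer `(φ*, ψ*) ∈ Φ_c`, unique up to a constant shift. -/
theorem dual_maximizer_exists_unique
    {X Y : Type*} [MetricSpace X] [CompleteSpace X] [TopologicalSpace.SeparableSpace X]
    [MeasurableSpace X] [BorelSpace X]
    [MetricSpace Y] [CompleteSpace Y] [TopologicalSpace.SeparableSpace Y]
    [MeasurableSpace Y] [BorelSpace Y]
    (c : X × Y → ℝ) (hc_nonneg : ∀ z, 0 ≤ c z) (hc_bdd : ∃ M, ∀ z, c z ≤ M)
    (hc_uc : UniformContinuous c)
    (P : Measure X) (Q : Measure Y) [IsProbabilityMeasure P] [IsProbabilityMeasure Q]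
    (ε : ℝ) (hε : 0 < ε) :
    (∃ (φs : BoundedContinuousFunction X ℝ) (ψs : BoundedContinuousFunction Y ℝ),
        IsDualMaximizer c P Q ε φs ψs) ∧
    (∀ (φ₁ : BoundedContinuousFunction X ℝ) (ψ₁ : BoundedContinuousFunction Y ℝ)
        (φ₂ : BoundedContinuousFunction X ℝ) (ψ₂ : BoundedContinuousFunction Y ℝ),
        IsDualMaximizer c P Q ε φ₁ ψ₁ → IsDualMaximizer c P Q ε φ₂ ψ₂ →
        ∃ a : ℝ, (∀ᵐ x ∂P, φ₁ x = φ₂ x - a) ∧ (∀ᵐ y ∂Q, ψ₁ y = ψ₂ y + a)) := by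
  refine ⟨dual_maximizer_exists c hc_nonneg hc_bdd hc_uc P Q ε hε, ?_⟩
  intro φ₁ ψ₁ φ₂ ψ₂ h1 h2
  exact dual_maximizer_unique hε φ₁ ψ₁ φ₂ ψ₂ h1 h2
end

section
/- Let X and Y be compact metric spaces, c : X × Y → ℝ continuous, P a Borel probability measure on X, Q a Borel probability measure on Y, and ε > 0. Define F : C(X × Y) → ℝ by F(p) = − max_{(φ,ψ) ∈ Φ_{c−p}} { ∫ φ dP − ε log ∫ e^{−ψ/ε} dQ }, where Φ_{c−p} is the set of pairs of continuous functions (φ,ψ) with φ(x) + ψ(y) ≤ c(x,y) − p(x,y) for all x,y (the maximum exists). Then F is convex and lower semicontinuous on C(X × Y) equipped with the uniform norm. -/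
open MeasureTheory Filter Topology

set_option linter.unusedSectionVars false

namespace DualFAux

variable {X Y : Type*} [MetricSpace X] [CompactSpace X] [MeasurableSpace X] [BorelSpace X]
    [MetricSpace Y] [CompactSpace Y] [MeasurableSpace Y] [BorelSpace Y]

noncomputable def G (P : Measure X) (Q : Measure Y) (ε : ℝ) (φψ : C(X, ℝ) × C(Y, ℝ)) : ℝ :=
  ∫ x, φψ.1 x ∂P - ε * Real.log (∫ y, Real.exp (-(φψ.2 y) / ε) ∂Q)

def S (c : X × Y → ℝ) (p : C(X × Y, ℝ)) : Set (C(X, ℝ) × C(Y, ℝ)) :=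
  {φψ | ∀ x y, φψ.1 x + φψ.2 y ≤ c (x, y) - p (x, y)}

lemma integ {Z : Type*} [MetricSpace Z] [CompactSpace Z] [MeasurableSpace Z] [BorelSpace Z]
    (μ : Measure Z) [IsFiniteMeasure μ] {f : Z → ℝ} (hf : Continuous f) : Integrable f μ :=
  hf.integrable_of_hasCompactSupport (HasCompactSupport.of_compactSpace f)

lemma nonempty_of_prob {Z : Type*} [MeasurableSpace Z] (μ : Measure Z) [IsProbabilityMeasure μ] :
    Nonempty Z := by
  by_contra h
  rw [not_nonempty_iff] at h
  have h1 : μ Set.univ = 1 := measure_univ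
  rw [Set.univ_eq_empty_iff.mpr h, measure_empty] at h1
  exact zero_ne_one h1

lemma expint_pos (Q : Measure Y) [IsProbabilityMeasure Q] (ε : ℝ) (ψ : C(Y, ℝ)) :
    0 < ∫ y, Real.exp (-(ψ y) / ε) ∂Q :=
  integral_exp_pos (f := fun y => -(ψ y) / ε) (integ Q (by fun_prop))

lemma S_nonempty [Nonempty X] [Nonempty Y] {c : X × Y → ℝ} (hc : Continuous c)
    (p : C(X × Y, ℝ)) : (S c p).Nonempty := by
  obtain ⟨z₀, -, hz₀⟩ := isCompact_univ.exists_isMinOn Set.univ_nonempty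
    ((hc.sub p.continuous).continuousOn)
  refine ⟨(ContinuousMap.const X (c z₀ - p z₀), 0), fun x y => ?_⟩
  simpa using isMinOn_iff.mp hz₀ (x, y) trivial


lemma image_bddAbove [Nonempty X] [Nonempty Y] {c : X × Y → ℝ} (hc : Continuous c)
    (P : Measure X) (Q : Measure Y) [IsProbabilityMeasure P] [IsProbabilityMeasure Q]
    {ε : ℝ} (hε : 0 < ε) (p : C(X × Y, ℝ)) : BddAbove (G P Q ε '' S c p) := by
  obtain ⟨z₁, -, hz₁⟩ := isCompact_univ.exists_isMaxOn Set.univ_nonempty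
    ((hc.sub p.continuous).continuousOn)
  set M : ℝ := c z₁ - p z₁ with hM
  refine ⟨M, ?_⟩
  rintro - ⟨⟨φ, ψ⟩, hmem, rfl⟩
  obtain ⟨y₀, -, hy₀⟩ := isCompact_univ.exists_isMaxOn Set.univ_nonempty
    ψ.continuous.continuousOn
  have hy₀' : ∀ y, ψ y ≤ ψ y₀ := fun y => isMaxOn_iff.mp hy₀ y trivial
  have hz₁' : ∀ z, c z - p z ≤ M := fun z => isMaxOn_iff.mp hz₁ z trivial
  -- lower bound on the exponential integral
  have hIexp : Real.exp (-(ψ y₀) / ε) ≤ ∫ y, Real.exp (-(ψ y) / ε) ∂Q := by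
    have := integral_mono (μ := Q) (f := fun _ => Real.exp (-(ψ y₀) / ε))
      (g := fun y => Real.exp (-(ψ y) / ε)) (integrable_const _)
      (integ Q (by fun_prop))
      (fun y => Real.exp_le_exp.mpr ((div_le_div_iff_of_pos_right hε).mpr (neg_le_neg (hy₀' y))))
    simpa using this
  have hlogI : -(ψ y₀) / ε ≤ Real.log (∫ y, Real.exp (-(ψ y) / ε) ∂Q) :=
    (Real.le_log_iff_exp_le (expint_pos Q ε ψ)).mpr hIexp
  have h2 : -ε * Real.log (∫ y, Real.exp (-(ψ y) / ε) ∂Q) ≤ ψ y₀ := by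
    have := mul_le_mul_of_nonneg_left hlogI hε.le
    rw [mul_div_cancel₀ _ hε.ne'] at this
    linarith
  have h1 : ∫ x, φ x ∂P ≤ M - ψ y₀ := by
    have := integral_mono (μ := P) (f := fun x => φ x) (g := fun _ => M - ψ y₀)
      (integ P φ.continuous) (integrable_const _)
      (fun x => by
        have h3 := hmem x y₀
        have h4 := hz₁' (x, y₀)
        dsimp at h3 ⊢
        linarith)
    simpa using this
  have : G P Q ε (φ, ψ) = ∫ x, φ x ∂P + -ε * Real.log (∫ y, Real.exp (-(ψ y) / ε) ∂Q) := by
    simp [G]; ring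
  rw [this]
  linarith


lemma exp_integral_combination (Q : Measure Y) [IsProbabilityMeasure Q] {ε : ℝ} (hε : 0 < ε)
    {a b : ℝ} (ha : 0 < a) (hb : 0 < b) (hab : a + b = 1) (ψ₁ ψ₂ : C(Y, ℝ)) :
    ∫ y, Real.exp (-(a * ψ₁ y + b * ψ₂ y) / ε) ∂Q ≤
      (∫ y, Real.exp (-(ψ₁ y) / ε) ∂Q) ^ a * (∫ y, Real.exp (-(ψ₂ y) / ε) ∂Q) ^ b := by
  set f : Y → ℝ := fun y => Real.exp (-(a * ψ₁ y) / ε) with hf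
  set g : Y → ℝ := fun y => Real.exp (-(b * ψ₂ y) / ε) with hg
  have hpq : (1/a).HolderConjugate (1/b) :=
    Real.holderConjugate_one_div ha hb hab
  have hbound : ∀ (t : ℝ) (ht : 0 < t) (ψ : C(Y, ℝ)) (y : Y),
      -(t * ψ y) / ε ≤ t * ‖ψ‖ / ε := by
    intro t ht ψ y
    gcongr
    have h5 : -(ψ y) ≤ ‖ψ‖ := by
      have h6 := ψ.norm_coe_le_norm y
      rw [Real.norm_eq_abs] at h6
      linarith [neg_abs_le (ψ y)]
    calc -(t * ψ y) = t * (-(ψ y)) := by ring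
      _ ≤ t * ‖ψ‖ := mul_le_mul_of_nonneg_left h5 ht.le
  have hfm : MemLp f (ENNReal.ofReal (1/a)) Q := by
    refine MemLp.of_bound ((by fun_prop : Continuous f).aestronglyMeasurable)
      (Real.exp (a * ‖ψ₁‖ / ε)) (Filter.Eventually.of_forall fun y => ?_)
    rw [Real.norm_of_nonneg (Real.exp_nonneg _)]
    exact Real.exp_le_exp.mpr (hbound a ha ψ₁ y)
  have hgm : MemLp g (ENNReal.ofReal (1/b)) Q := by
    refine MemLp.of_bound ((by fun_prop : Continuous g).aestronglyMeasurable)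
      (Real.exp (b * ‖ψ₂‖ / ε)) (Filter.Eventually.of_forall fun y => ?_)
    rw [Real.norm_of_nonneg (Real.exp_nonneg _)]
    exact Real.exp_le_exp.mpr (hbound b hb ψ₂ y)
  have key := integral_mul_le_Lp_mul_Lq_of_nonneg hpq
    (Filter.Eventually.of_forall fun y => (Real.exp_nonneg _ : (0:ℝ) ≤ f y))
    (Filter.Eventually.of_forall fun y => (Real.exp_nonneg _ : (0:ℝ) ≤ g y)) hfm hgm
  have hL : ∫ y, f y * g y ∂Q = ∫ y, Real.exp (-(a * ψ₁ y + b * ψ₂ y) / ε) ∂Q := by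
    refine integral_congr_ae (Filter.Eventually.of_forall fun y => ?_)
    rw [hf, hg]
    dsimp only
    rw [← Real.exp_add]
    congr 1
    ring
  have hR1 : ∫ y, f y ^ (1/a) ∂Q = ∫ y, Real.exp (-(ψ₁ y) / ε) ∂Q := by
    refine integral_congr_ae (Filter.Eventually.of_forall fun y => ?_)
    rw [hf]
    dsimp only
    rw [← Real.exp_mul]
    congr 1
    field_simp
  have hR2 : ∫ y, g y ^ (1/b) ∂Q = ∫ y, Real.exp (-(ψ₂ y) / ε) ∂Q := by
    refine integral_congr_ae (Filter.Eventually.of_forall fun y => ?_)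
    rw [hg]
    dsimp only
    rw [← Real.exp_mul]
    congr 1
    field_simp
  rw [hL, hR1, hR2, one_div_one_div, one_div_one_div] at key
  exact key


lemma G_superadd (P : Measure X) (Q : Measure Y) [IsProbabilityMeasure P] [IsProbabilityMeasure Q]
    {ε : ℝ} (hε : 0 < ε) {a b : ℝ} (ha : 0 < a) (hb : 0 < b) (hab : a + b = 1)
    (φ₁ φ₂ : C(X, ℝ)) (ψ₁ ψ₂ : C(Y, ℝ)) :
    a * G P Q ε (φ₁, ψ₁) + b * G P Q ε (φ₂, ψ₂) ≤
      G P Q ε (a • φ₁ + b • φ₂, a • ψ₁ + b • ψ₂) := by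
  have hI1 := expint_pos Q ε ψ₁
  have hI2 := expint_pos Q ε ψ₂
  have hint : ∫ x, (a • φ₁ + b • φ₂) x ∂P = a * ∫ x, φ₁ x ∂P + b * ∫ x, φ₂ x ∂P := by
    simp only [ContinuousMap.add_apply, ContinuousMap.smul_apply, smul_eq_mul]
    rw [integral_add ((integ P φ₁.continuous).const_mul a) ((integ P φ₂.continuous).const_mul b),
      integral_const_mul, integral_const_mul]
  have hJeq : ∫ y, Real.exp (-((a • ψ₁ + b • ψ₂) y) / ε) ∂Q
      = ∫ y, Real.exp (-(a * ψ₁ y + b * ψ₂ y) / ε) ∂Q := by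
    refine integral_congr_ae (Filter.Eventually.of_forall fun y => ?_)
    simp [ContinuousMap.add_apply, ContinuousMap.smul_apply, smul_eq_mul]
  have hJpos : 0 < ∫ y, Real.exp (-(a * ψ₁ y + b * ψ₂ y) / ε) ∂Q := by
    rw [← hJeq]; exact expint_pos Q ε (a • ψ₁ + b • ψ₂)
  have hlog : Real.log (∫ y, Real.exp (-(a * ψ₁ y + b * ψ₂ y) / ε) ∂Q)
      ≤ a * Real.log (∫ y, Real.exp (-(ψ₁ y) / ε) ∂Q)
        + b * Real.log (∫ y, Real.exp (-(ψ₂ y) / ε) ∂Q) := by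
    have h1 := (Real.log_le_log_iff hJpos
      (mul_pos (Real.rpow_pos_of_pos hI1 a) (Real.rpow_pos_of_pos hI2 b))).mpr
      (exp_integral_combination Q hε ha hb hab ψ₁ ψ₂)
    rwa [Real.log_mul (Real.rpow_pos_of_pos hI1 a).ne' (Real.rpow_pos_of_pos hI2 b).ne',
      Real.log_rpow hI1, Real.log_rpow hI2] at h1
  have hεlog := mul_le_mul_of_nonneg_left hlog hε.le
  simp only [G]
  rw [hint, hJeq]
  nlinarith [hεlog]

lemma shift_mem {c : X × Y → ℝ} {p p' : C(X × Y, ℝ)} {φ : C(X, ℝ)} {ψ : C(Y, ℝ)}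
    (hmem : (φ, ψ) ∈ S c p) :
    (φ - ContinuousMap.const X (dist p p'), ψ) ∈ S c p' := by
  intro x y
  have h1 := hmem x y
  have h2 : dist (p (x, y)) (p' (x, y)) ≤ dist p p' := ContinuousMap.dist_apply_le_dist _
  rw [Real.dist_eq, abs_le] at h2
  simp only [ContinuousMap.sub_apply, ContinuousMap.const_apply]
  dsimp at h1 ⊢
  linarith [h2.1, h2.2]

lemma G_shift (P : Measure X) (Q : Measure Y) [IsProbabilityMeasure P] (ε δ : ℝ)
    (φ : C(X, ℝ)) (ψ : C(Y, ℝ)) :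
    G P Q ε (φ - ContinuousMap.const X δ, ψ) = G P Q ε (φ, ψ) - δ := by
  simp only [G]
  have : ∫ x, (φ - ContinuousMap.const X δ) x ∂P = (∫ x, φ x ∂P) - δ := by
    simp only [ContinuousMap.sub_apply, ContinuousMap.const_apply]
    rw [integral_sub (integ P φ.continuous) (integrable_const _)]
    simp
  rw [this]
  ring

end DualFAux

/-- The functional `F(p) = − sup_{(φ,ψ) ∈ Φ_{c−p}} { ∫ φ dP − ε log ∫ e^{−ψ/ε} dQ }`
on `C(X × Y)` (for compact `X`, `Y` the supremum is attained, i.e. it is a maximum). -/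
noncomputable def dualF {X Y : Type*} [TopologicalSpace X] [TopologicalSpace Y]
    [MeasurableSpace X] [MeasurableSpace Y]
    (c : X × Y → ℝ) (P : Measure X) (Q : Measure Y) (ε : ℝ) (p : C(X × Y, ℝ)) : ℝ :=
  -sSup ((fun φψ : C(X, ℝ) × C(Y, ℝ) =>
      ∫ x, φψ.1 x ∂P - ε * Real.log (∫ y, Real.exp (-(φψ.2 y) / ε) ∂Q)) ''
    {φψ : C(X, ℝ) × C(Y, ℝ) | ∀ x y, φψ.1 x + φψ.2 y ≤ c (x, y) - p (x, y)})

/-- On compact metric spaces, the functional `F` is convex and lower semicontinuous on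
`C(X × Y)` with the uniform norm. -/
theorem dualF_convex_lsc
    {X Y : Type*} [MetricSpace X] [CompactSpace X] [MeasurableSpace X] [BorelSpace X]
    [MetricSpace Y] [CompactSpace Y] [MeasurableSpace Y] [BorelSpace Y]
    (c : X × Y → ℝ) (hc : Continuous c)
    (P : Measure X) (Q : Measure Y) [IsProbabilityMeasure P] [IsProbabilityMeasure Q]
    (ε : ℝ) (hε : 0 < ε) :
    ConvexOn ℝ Set.univ (dualF c P Q ε) ∧ LowerSemicontinuous (dualF c P Q ε) := by
  haveI : Nonempty X := DualFAux.nonempty_of_prob P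
  haveI : Nonempty Y := DualFAux.nonempty_of_prob Q
  set V : C(X × Y, ℝ) → ℝ := fun p => sSup (DualFAux.G P Q ε '' DualFAux.S c p) with hVdef
  have hdF : ∀ p, dualF c P Q ε p = -V p := fun p => rfl
  have hne : ∀ p, (DualFAux.G P Q ε '' DualFAux.S c p).Nonempty :=
    fun p => (DualFAux.S_nonempty hc p).image _
  have hbdd : ∀ p, BddAbove (DualFAux.G P Q ε '' DualFAux.S c p) :=
    fun p => DualFAux.image_bddAbove hc P Q hε p
  have hlip : ∀ p p' : C(X × Y, ℝ), V p ≤ V p' + dist p p' := by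
    intro p p'
    refine csSup_le (hne p) ?_
    rintro - ⟨⟨φ, ψ⟩, hmem, rfl⟩
    have h1 : DualFAux.G P Q ε (φ - ContinuousMap.const X (dist p p'), ψ) ≤ V p' :=
      le_csSup (hbdd p') ⟨_, DualFAux.shift_mem hmem, rfl⟩
    rw [DualFAux.G_shift] at h1
    linarith
  have hVcont : Continuous V := by
    have hL : LipschitzWith 1 V := LipschitzWith.of_dist_le_mul (fun p p' => by
      rw [Real.dist_eq, NNReal.coe_one, one_mul, abs_le]
      have h1 := hlip p p'
      have h2 := hlip p' p
      rw [dist_comm p' p] at h2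
      constructor <;> linarith)
    exact hL.continuous
  constructor
  · refine ⟨convex_univ, ?_⟩
    intro p₁ _ p₂ _ a b ha hb hab
    rw [smul_eq_mul, smul_eq_mul, hdF, hdF, hdF]
    rcases eq_or_lt_of_le ha with h0 | ha'
    · have hb1 : b = 1 := by linarith
      rw [← h0, hb1]
      simp
    rcases eq_or_lt_of_le hb with h0 | hb'
    · have ha1 : a = 1 := by linarith
      rw [← h0, ha1]
      simp
    have key : ∀ g₁ ∈ DualFAux.G P Q ε '' DualFAux.S c p₁,
        ∀ g₂ ∈ DualFAux.G P Q ε '' DualFAux.S c p₂,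
        a * g₁ + b * g₂ ≤ V (a • p₁ + b • p₂) := by
      rintro - ⟨⟨φ₁, ψ₁⟩, h₁, rfl⟩ - ⟨⟨φ₂, ψ₂⟩, h₂, rfl⟩
      have hmem : (a • φ₁ + b • φ₂, a • ψ₁ + b • ψ₂) ∈ DualFAux.S c (a • p₁ + b • p₂) := by
        intro x y
        have k₁ := h₁ x y
        have k₂ := h₂ x y
        dsimp at k₁ k₂
        simp only [ContinuousMap.add_apply, ContinuousMap.smul_apply, smul_eq_mul]
        have hc1 : a * c (x, y) + b * c (x, y) = c (x, y) := by rw [← add_mul, hab, one_mul]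
        have l₁ := mul_le_mul_of_nonneg_left k₁ ha'.le
        have l₂ := mul_le_mul_of_nonneg_left k₂ hb'.le
        linarith
      have hG := DualFAux.G_superadd P Q hε ha' hb' hab φ₁ φ₂ ψ₁ ψ₂
      exact hG.trans (le_csSup (hbdd _) ⟨_, hmem, rfl⟩)
    have key2 : ∀ g₁ ∈ DualFAux.G P Q ε '' DualFAux.S c p₁,
        a * g₁ + b * V p₂ ≤ V (a • p₁ + b • p₂) := by
      intro g₁ hg₁
      have h3 : V p₂ ≤ (V (a • p₁ + b • p₂) - a * g₁) / b := by
        refine csSup_le (hne p₂) (fun g₂ hg₂ => ?_)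
        rw [le_div_iff₀ hb']
        have := key g₁ hg₁ g₂ hg₂
        linarith
      have h4 := (le_div_iff₀ hb').mp h3
      linarith
    have h5 : V p₁ ≤ (V (a • p₁ + b • p₂) - b * V p₂) / a := by
      refine csSup_le (hne p₁) (fun g₁ hg₁ => ?_)
      rw [le_div_iff₀ ha']
      have := key2 g₁ hg₁
      linarith
    have h6 := (le_div_iff₀ ha').mp h5
    linarith
  · have hF : dualF c P Q ε = fun p => -V p := funext hdF
    rw [hF]
    exact (hVcont.neg).lowerSemicontinuous
end
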